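/- arXiv:1807.08950 — 11 statements merged into one kernel-verified Lean document; each statement's English description precedes it below -/
import Mathlib

section
/- Let 𝔖 = (X, 𝒰, φ) be a dynamical system with inputs, and suppose that either 𝒰 ⊆ L^p([0,∞), U) for some p ∈ [1,∞) with ‖·‖_𝒰 = ‖·‖_{L^p}, or 𝒰 ⊆ L^∞_0([0,∞), U) := { u ∈ L^∞([0,∞),U) : ‖u(·+t)‖_∞ → 0 as t → ∞ } with ‖·‖_𝒰 = ‖·‖_{L^∞}, where U is a Banach space. If 𝔖 is of weak asymptotic gain (i.e., of weak asymptotic gain γ̄ for some γ̄ ∈ 𝒦 ∪ {0}), then 𝔖 is of weak asymptotic gain 0. -/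
open MeasureTheory Filter Set Topology
open scoped ENNReal NNReal

noncomputable section

/-- The class `𝒦` of comparison functions: continuous, strictly increasing functions
`γ : [0,∞) → [0,∞)` with `γ 0 = 0` (modelled on `ℝ` via conditions on `Ici 0`). -/
def ClassK (γ : ℝ → ℝ) : Prop :=
  ContinuousOn γ (Ici 0) ∧ StrictMonoOn γ (Ici 0) ∧ γ 0 = 0 ∧ ∀ r : ℝ, 0 ≤ r → 0 ≤ γ r

/-- The class `𝒦 ∪ {0}`. -/
def ClassKZero (γ : ℝ → ℝ) : Prop := ClassK γ ∨ ∀ r : ℝ, γ r = 0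

/-- The class `ℒ` of comparison functions: continuous, strictly decreasing functions
`β : [0,∞) → [0,∞)` with `β r → 0` as `r → ∞`. -/
def ClassL (β : ℝ → ℝ) : Prop :=
  ContinuousOn β (Ici 0) ∧ StrictAntiOn β (Ici 0) ∧ (∀ r : ℝ, 0 ≤ r → 0 ≤ β r) ∧
    Tendsto β atTop (nhds 0)

/-- A (forward-complete) dynamical system with inputs `𝔖 = (X, 𝒰, φ)`. Inputs are
functions `u : ℝ → U` (only the values on `[0,∞)` matter), `inNorm` is the norm `‖·‖_𝒰`. -/
structure DynSysWithInputs (X : Type*) [NormedAddCommGroup X] (U : Type*) where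
  inputs : Set (ℝ → U)
  inputs_nonempty : inputs.Nonempty
  inNorm : (ℝ → U) → ℝ
  inNorm_nonneg : ∀ u ∈ inputs, 0 ≤ inNorm u
  flow : ℝ → X → (ℝ → U) → X
  shift_mem : ∀ u ∈ inputs, ∀ τ : ℝ, 0 ≤ τ → (fun s => u (s + τ)) ∈ inputs
  shift_norm_le : ∀ u ∈ inputs, ∀ τ : ℝ, 0 ≤ τ → inNorm (fun s => u (s + τ)) ≤ inNorm u
  concat_mem : ∀ u₁ ∈ inputs, ∀ u₂ ∈ inputs, ∀ τ : ℝ, 0 ≤ τ →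
    (fun s => if s < τ then u₁ s else u₂ (s - τ)) ∈ inputs
  flow_zero : ∀ (x₀ : X), ∀ u ∈ inputs, flow 0 x₀ u = x₀
  cocycle : ∀ (x₀ : X), ∀ u ∈ inputs, ∀ s t : ℝ, 0 ≤ s → 0 ≤ t →
    flow (t + s) x₀ u = flow t (flow s x₀ u) (fun r => u (r + s))
  flow_continuous : ∀ (x₀ : X), ∀ u ∈ inputs, ContinuousOn (fun t => flow t x₀ u) (Ici 0)
  causal : ∀ (x₀ : X), ∀ u₁ ∈ inputs, ∀ u₂ ∈ inputs, ∀ τ : ℝ, 0 ≤ τ →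
    (∀ s ∈ Icc (0:ℝ) τ, u₁ s = u₂ s) → ∀ t ∈ Icc (0:ℝ) τ, flow t x₀ u₁ = flow t x₀ u₂

variable {X U : Type*} [NormedAddCommGroup X]

/-- Uniform global stability with explicit gains `σ`, `γ`. -/
def UGSWith (S : DynSysWithInputs X U) (σ γ : ℝ → ℝ) : Prop :=
  ∀ (x₀ : X), ∀ u ∈ S.inputs, ∀ t : ℝ, 0 ≤ t →
    ‖S.flow t x₀ u‖ ≤ σ ‖x₀‖ + γ (S.inNorm u)

/-- Uniform global stability. -/
def UGS (S : DynSysWithInputs X U) : Prop :=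
  ∃ σ γ : ℝ → ℝ, ClassK σ ∧ ClassK γ ∧ UGSWith S σ γ

/-- The weak asymptotic gain property with gain `γ`. -/
def WeakAGWith (S : DynSysWithInputs X U) (γ : ℝ → ℝ) : Prop :=
  ∀ ε : ℝ, 0 < ε → ∀ (x₀ : X), ∀ u ∈ S.inputs, ∃ τ : ℝ, 0 ≤ τ ∧
    ∀ t : ℝ, τ ≤ t → ‖S.flow t x₀ u‖ ≤ ε + γ (S.inNorm u)

/-- The weak asymptotic gain property (for some gain in `𝒦 ∪ {0}`). -/
def WeakAG (S : DynSysWithInputs X U) : Prop :=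
  ∃ γ : ℝ → ℝ, ClassKZero γ ∧ WeakAGWith S γ

/-- The strong asymptotic gain property with gain `γ`. -/
def StrongAGWith (S : DynSysWithInputs X U) (γ : ℝ → ℝ) : Prop :=
  ∀ ε : ℝ, 0 < ε → ∀ (x₀ : X), ∃ τ : ℝ, 0 ≤ τ ∧
    ∀ t : ℝ, τ ≤ t → ∀ u ∈ S.inputs, ‖S.flow t x₀ u‖ ≤ ε + γ (S.inNorm u)

/-- The strong asymptotic gain property. -/
def StrongAG (S : DynSysWithInputs X U) : Prop :=
  ∃ γ : ℝ → ℝ, ClassKZero γ ∧ StrongAGWith S γ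

/-- The uniform asymptotic gain property with gain `γ`. -/
def UniformAGWith (S : DynSysWithInputs X U) (γ : ℝ → ℝ) : Prop :=
  ∀ ε : ℝ, 0 < ε → ∀ r : ℝ, 0 < r → ∃ τ : ℝ, 0 ≤ τ ∧
    ∀ t : ℝ, τ ≤ t → ∀ (x₀ : X), ‖x₀‖ ≤ r → ∀ u ∈ S.inputs,
      ‖S.flow t x₀ u‖ ≤ ε + γ (S.inNorm u)

/-- The uniform asymptotic gain property. -/
def UniformAG (S : DynSysWithInputs X U) : Prop :=
  ∃ γ : ℝ → ℝ, ClassKZero γ ∧ UniformAGWith S γ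

/-- The weak limit property with gain `γ`. -/
def WeakLimitWith (S : DynSysWithInputs X U) (γ : ℝ → ℝ) : Prop :=
  ∀ ε : ℝ, 0 < ε → ∀ (x₀ : X), ∀ u ∈ S.inputs, ∃ τ : ℝ, 0 ≤ τ ∧
    sInf ((fun t => ‖S.flow t x₀ u‖) '' Icc (0:ℝ) τ) ≤ ε + γ (S.inNorm u)

/-- The weak limit property. -/
def WeakLimit (S : DynSysWithInputs X U) : Prop :=
  ∃ γ : ℝ → ℝ, ClassK γ ∧ WeakLimitWith S γ

/-- Weak input-to-state stability. -/
def WeakISS (S : DynSysWithInputs X U) : Prop := UGS S ∧ WeakAG S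

/-- Strong input-to-state stability. -/
def StrongISS (S : DynSysWithInputs X U) : Prop := UGS S ∧ StrongAG S

/-- Uniform input-to-state stability. -/
def UniformISS (S : DynSysWithInputs X U) : Prop := UGS S ∧ UniformAG S

lemma shift_lintegral' (g : ℝ → ℝ≥0∞) (τ : ℝ) :
    ∫⁻ s in Ici (0:ℝ), g (s + τ) = ∫⁻ s in Ici τ, g s := by
  have hmp : MeasurePreserving (· + τ) (volume : Measure ℝ) volume :=
    measurePreserving_add_right volume τ
  have hpre : ((· + τ) ⁻¹' Ici τ : Set ℝ) = Ici 0 := by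
    ext s; simp [le_add_iff_nonneg_left]
  have hr : MeasurePreserving (· + τ) (volume.restrict (Ici (0:ℝ))) (volume.restrict (Ici τ)) := by
    have := hmp.restrict_preimage (measurableSet_Ici (a := τ))
    rwa [hpre] at this
  have hemb : MeasurableEmbedding (· + τ : ℝ → ℝ) :=
    (Homeomorph.addRight τ).measurableEmbedding
  calc ∫⁻ s in Ici (0:ℝ), g (s + τ) = ∫⁻ s, g s ∂((volume.restrict (Ici (0:ℝ))).map (· + τ)) :=
        (hemb.lintegral_map g).symm
    _ = ∫⁻ s in Ici τ, g s := by rw [hr.map_eq]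

lemma tail_small' (g : ℝ → ℝ≥0∞) (hg : ∫⁻ s in Ici (0:ℝ), g s ≠ ⊤) {δ : ℝ≥0∞} (hδ : 0 < δ) :
    ∃ τ : ℝ, 0 ≤ τ ∧ ∫⁻ s in Ici τ, g s < δ := by
  set ν : Measure ℝ := volume.withDensity g with hν
  have happ : ∀ τ : ℝ, ν (Ici τ) = ∫⁻ s in Ici τ, g s :=
    fun τ => withDensity_apply g measurableSet_Ici
  have hanti : Antitone (fun n : ℕ => Ici ((n : ℝ))) := fun m n hmn =>
    Ici_subset_Ici.2 (by exact_mod_cast hmn)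
  have hempty : ⋂ n : ℕ, Ici ((n : ℝ)) = (∅ : Set ℝ) := by
    ext x; simp only [mem_iInter, mem_Ici, mem_empty_iff_false, iff_false, not_forall, not_le]
    obtain ⟨n, hn⟩ := exists_nat_gt x; exact ⟨n, hn⟩
  have htend : Tendsto (fun n : ℕ => ν (Ici (n : ℝ))) atTop (nhds 0) := by
    have := tendsto_measure_iInter_atTop (μ := ν)
      (fun n : ℕ => (measurableSet_Ici (a := (n : ℝ))).nullMeasurableSet) hanti
      ⟨0, by simpa [happ] using hg⟩
    simpa [hempty, Function.comp_def] using this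
  obtain ⟨n, hn⟩ := (htend.eventually_lt_const hδ).exists
  exact ⟨n, Nat.cast_nonneg n, by rwa [happ] at hn⟩

/-- In the `L^p` case (`p ≠ 0, ⊤`), the `eLpNorm` of shifted inputs gets small. -/
lemma shift_eLpNorm_small {V : Type*} [NormedAddCommGroup V]
    {u : ℝ → V} {p : ℝ≥0∞} (hp0 : p ≠ 0) (hpt : p ≠ ⊤)
    (hu : MemLp u p (volume.restrict (Ici (0:ℝ)))) {δ : ℝ} (hδ : 0 < δ) :
    ∃ τ : ℝ, 0 ≤ τ ∧
      (eLpNorm (fun s => u (s + τ)) p (volume.restrict (Ici (0:ℝ)))).toReal < δ := by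
  set pr := p.toReal with hpr
  have hpr0 : 0 < pr := ENNReal.toReal_pos hp0 hpt
  set g : ℝ → ℝ≥0∞ := fun s => ‖u s‖ₑ ^ pr with hg
  have hfin : ∫⁻ s in Ici (0:ℝ), g s ≠ ⊤ :=
    (lintegral_rpow_enorm_lt_top_of_eLpNorm_lt_top hp0 hpt hu.2).ne
  have hδ' : (0:ℝ≥0∞) < ENNReal.ofReal δ ^ pr :=
    ENNReal.rpow_pos (ENNReal.ofReal_pos.2 hδ) ENNReal.ofReal_ne_top
  obtain ⟨τ, hτ0, hτ⟩ := tail_small' g hfin hδ'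
  refine ⟨τ, hτ0, ?_⟩
  have h1 : eLpNorm (fun s => u (s + τ)) p (volume.restrict (Ici (0:ℝ)))
      = (∫⁻ s in Ici τ, g s) ^ (1 / pr) := by
    rw [eLpNorm_eq_lintegral_rpow_enorm_toReal hp0 hpt, ← shift_lintegral' g τ]
  have h2 : (∫⁻ s in Ici τ, g s) ^ (1 / pr) < ENNReal.ofReal δ := by
    calc (∫⁻ s in Ici τ, g s) ^ (1 / pr)
        < (ENNReal.ofReal δ ^ pr) ^ (1 / pr) :=
          ENNReal.rpow_lt_rpow hτ (by positivity)
      _ = ENNReal.ofReal δ := by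
          rw [← ENNReal.rpow_mul, mul_one_div_cancel hpr0.ne', ENNReal.rpow_one]
  rw [h1]
  exact ENNReal.toReal_lt_of_lt_ofReal h2

/-- If the input space of a dynamical system with inputs is contained in
`L^p([0,∞),U)` for some `p ∈ [1,∞)` (with `‖·‖_𝒰 = ‖·‖_{L^p}`), or in
`L^∞₀([0,∞),U) = {u ∈ L^∞ : ‖u(·+t)‖_∞ → 0}` (with `‖·‖_𝒰 = ‖·‖_{L^∞}`), then
weak asymptotic gain implies weak asymptotic gain `0`. -/
theorem weakAG_implies_weakAG_zero
    [NormedAddCommGroup U] [CompleteSpace U]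
    (S : DynSysWithInputs X U)
    (hU : (∃ p : ℝ≥0∞, 1 ≤ p ∧ p ≠ ⊤ ∧ ∀ u ∈ S.inputs,
            MemLp u p (volume.restrict (Ici (0:ℝ))) ∧
            S.inNorm u = (eLpNorm u p (volume.restrict (Ici (0:ℝ)))).toReal) ∨
          (∀ u ∈ S.inputs,
            MemLp u ⊤ (volume.restrict (Ici (0:ℝ))) ∧
            Tendsto (fun t : ℝ =>
                (eLpNorm (fun s => u (s + t)) ⊤ (volume.restrict (Ici (0:ℝ)))).toReal)
              atTop (nhds 0) ∧
            S.inNorm u = (eLpNorm u ⊤ (volume.restrict (Ici (0:ℝ)))).toReal))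
    (h : WeakAG S) :
    WeakAGWith S (fun _ => 0) := by
  obtain ⟨γ, hγ, hAG⟩ := h
  intro ε hε x₀ u hu
  rcases hγ with hK | hzero
  · -- γ is of class 𝒦
    obtain ⟨hcont, _, hγ0, hγnn⟩ := hK
    -- continuity of γ at 0 within Ici 0
    have hcw : ContinuousWithinAt γ (Ici (0:ℝ)) 0 := hcont 0 self_mem_Ici
    obtain ⟨δ, hδpos, hδ⟩ := Metric.continuousWithinAt_iff.1 hcw (ε / 2) (half_pos hε)
    have hδ' : ∀ r : ℝ, 0 ≤ r → r < δ → γ r < ε / 2 := by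
      intro r hr0 hrδ
      have := hδ (x := r) hr0 (by rwa [Real.dist_eq, sub_zero, abs_of_nonneg hr0])
      rw [Real.dist_eq, hγ0, sub_zero, abs_of_nonneg (hγnn r hr0)] at this
      exact this
    -- find a shift τ₁ making the input small
    have key : ∃ τ₁ : ℝ, 0 ≤ τ₁ ∧ S.inNorm (fun s => u (s + τ₁)) < δ := by
      rcases hU with ⟨p, hp1, hpt, hLp⟩ | hLinf
      · have hp0 : p ≠ 0 := by
          intro hp; rw [hp] at hp1; exact (by simp at hp1 : False)
        obtain ⟨τ₁, hτ₁0, hlt⟩ := shift_eLpNorm_small hp0 hpt (hLp u hu).1 hδpos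
        refine ⟨τ₁, hτ₁0, ?_⟩
        rw [(hLp _ (S.shift_mem u hu τ₁ hτ₁0)).2]
        exact hlt
      · obtain ⟨_, htend, _⟩ := hLinf u hu
        have h1 : ∀ᶠ t : ℝ in atTop,
            (eLpNorm (fun s => u (s + t)) ⊤ (volume.restrict (Ici (0:ℝ)))).toReal < δ :=
          htend.eventually_lt_const hδpos
        obtain ⟨τ₁, hτ₁0, hlt⟩ := ((eventually_ge_atTop (0:ℝ)).and h1).exists
        refine ⟨τ₁, hτ₁0, ?_⟩
        rw [(hLinf _ (S.shift_mem u hu τ₁ hτ₁0)).2.2]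
        exact hlt
    obtain ⟨τ₁, hτ₁0, hsmall⟩ := key
    set u' : ℝ → U := fun s => u (s + τ₁) with hu'def
    have hu' : u' ∈ S.inputs := S.shift_mem u hu τ₁ hτ₁0
    set x₁ := S.flow τ₁ x₀ u with hx₁
    obtain ⟨τ₂, hτ₂0, hτ₂⟩ := hAG (ε / 2) (half_pos hε) x₁ u' hu'
    refine ⟨τ₁ + τ₂, by linarith, fun t ht => ?_⟩
    have ht1 : 0 ≤ t - τ₁ := by linarith
    have ht2 : τ₂ ≤ t - τ₁ := by linarith
    have hc : S.flow t x₀ u = S.flow (t - τ₁) x₁ u' := by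
      have := S.cocycle x₀ u hu τ₁ (t - τ₁) hτ₁0 ht1
      rw [sub_add_cancel] at this
      exact this
    have hγsmall : γ (S.inNorm u') < ε / 2 :=
      hδ' _ (S.inNorm_nonneg u' hu') hsmall
    have hb := hτ₂ (t - τ₁) ht2
    rw [hc]
    show ‖S.flow (t - τ₁) x₁ u'‖ ≤ ε + 0
    linarith
  · -- γ = 0
    obtain ⟨τ, hτ0, hτ⟩ := hAG ε hε x₀ u hu
    exact ⟨τ, hτ0, fun t ht => by simpa [hzero] using hτ t ht⟩
end
end

section
/- Let 𝔖 = (X, 𝒰, φ) be a dynamical system with inputs. If 𝔖 is uniformly globally stable and has the weak limit property, then 𝔖 is uniformly globally stable and has the weak asymptotic gain property. Moreover, if σ̲, γ̲ ∈ 𝒦 witness the uniform global stability and γ̄ ∈ 𝒦 witnesses the weak limit property, then γ(r) := σ̲(2γ̄(r)) + γ̲(r) is a weak asymptotic gain for 𝔖. -/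
open MeasureTheory Filter Set Topology
open scoped ENNReal NNReal

noncomputable section

variable {X U : Type*} [NormedAddCommGroup X]

private lemma classK_comp_gain {σ γ γbar : ℝ → ℝ}
    (hσ : ClassK σ) (hγ : ClassK γ) (hγbar : ClassK γbar) :
    ClassK (fun r => σ (2 * γbar r) + γ r) := by
  obtain ⟨hσc, hσm, hσ0, hσnn⟩ := hσ
  obtain ⟨hγc, hγm, hγ0, hγnn⟩ := hγ
  obtain ⟨hbc, hbm, hb0, hbnn⟩ := hγbar
  have hmaps : ∀ r ∈ Ici (0:ℝ), 2 * γbar r ∈ Ici (0:ℝ) := by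
    intro r hr
    have := hbnn r hr
    simp only [mem_Ici] at *
    linarith
  refine ⟨?_, ?_, ?_, ?_⟩
  · exact (hσc.comp (continuousOn_const.mul hbc) hmaps).add hγc
  · intro a ha b hb hab
    have h1 : 2 * γbar a < 2 * γbar b := by
      have := hbm ha hb hab; linarith
    have h2 : σ (2 * γbar a) < σ (2 * γbar b) := hσm (hmaps a ha) (hmaps b hb) h1
    have h3 : γ a < γ b := hγm ha hb hab
    dsimp only
    linarith
  · simp [hb0, hγ0, hσ0]
  · intro r hr
    have := hσnn (2 * γbar r) (hmaps r hr)
    have := hγnn r hr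
    dsimp only
    linarith

private lemma weakAG_main {X U : Type*} [NormedAddCommGroup X]
    (S : DynSysWithInputs X U) (σ γ γbar : ℝ → ℝ)
    (hσ : ClassK σ) (hγ : ClassK γ) (hγbar : ClassK γbar)
    (hUGS : UGSWith S σ γ) (hWL : WeakLimitWith S γbar) :
    WeakAGWith S (fun r => σ (2 * γbar r) + γ r) := by
  intro ε hε x₀ u hu
  set r := S.inNorm u with hr
  have hr0 : 0 ≤ r := S.inNorm_nonneg u hu
  have hbr0 : 0 ≤ γbar r := hγbar.2.2.2 r hr0
  -- choose c₀ > 0 with σ c₀ ≤ ε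
  have hσ0 : σ 0 = 0 := hσ.2.2.1
  have hcont : Tendsto σ (nhdsWithin 0 (Ici (0:ℝ))) (nhds 0) := by
    have := hσ.1 0 (by simp)
    rwa [ContinuousWithinAt, hσ0] at this
  have hev : ∀ᶠ s in nhdsWithin (0:ℝ) (Ioi 0), σ s < ε := by
    have h1 : ∀ᶠ s in nhdsWithin (0:ℝ) (Ici 0), σ s < ε :=
      hcont.eventually (Filter.Tendsto.eventually_lt_const hε tendsto_id)
    exact h1.filter_mono (nhdsWithin_mono _ Ioi_subset_Ici_self)
  obtain ⟨c₀, hc₀ε, hc₀pos⟩ := (hev.and self_mem_nhdsWithin).exists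
  -- choose c
  set c : ℝ := if γbar r ≤ 0 then c₀ else min c₀ (γbar r) with hc
  have hcpos : 0 < c := by
    rw [hc]; split
    · exact hc₀pos
    · exact lt_min hc₀pos (by linarith [not_le.mp (by assumption : ¬ γbar r ≤ 0)])
  have hkey : σ (c + γbar r) ≤ ε + σ (2 * γbar r) := by
    by_cases hbz : γbar r ≤ 0
    · have hbr : γbar r = 0 := le_antisymm hbz hbr0
      have : c = c₀ := by rw [hc, if_pos hbz]
      rw [hbr, this]
      simp only [add_zero, mul_zero, hσ0]
      linarith
    · have hcd : c = min c₀ (γbar r) := by rw [hc, if_neg hbz]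
      push_neg at hbz
      have h1 : c + γbar r ≤ 2 * γbar r := by
        have : c ≤ γbar r := hcd ▸ min_le_right _ _
        linarith
      rcases eq_or_lt_of_le h1 with h | h
      · rw [h]; linarith
      · have := (hσ.2.1 (by simp [mem_Ici]; linarith) (by simp [mem_Ici]; linarith) h).le
        linarith
  -- apply weak limit with ε = c/2
  obtain ⟨τ, hτ0, hτ⟩ := hWL (c/2) (by linarith) x₀ u hu
  -- find t* in [0, τ] with small norm
  set A : Set ℝ := (fun t => ‖S.flow t x₀ u‖) '' Icc (0:ℝ) τ with hA
  have hAne : A.Nonempty := ⟨_, ⟨0, ⟨le_refl _, hτ0⟩, rfl⟩⟩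
  have hAbdd : BddBelow A := ⟨0, fun x ⟨t, _, ht⟩ => ht ▸ norm_nonneg _⟩
  have hlt : sInf A < c + γbar r := lt_of_le_of_lt hτ (by linarith)
  obtain ⟨y, ⟨t₁, ht₁, hy⟩, hylt⟩ := (csInf_lt_iff hAbdd hAne).mp hlt
  have ht₁n : ‖S.flow t₁ x₀ u‖ < c + γbar r := by rw [show ‖S.flow t₁ x₀ u‖ = y from hy]; exact hylt
  refine ⟨τ, hτ0, fun t ht => ?_⟩
  -- cocycle
  have ht₁0 : 0 ≤ t₁ := ht₁.1
  have htt : 0 ≤ t - t₁ := by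
    have := ht₁.2
    linarith
  have hco := S.cocycle x₀ u hu t₁ (t - t₁) ht₁0 htt
  have hteq : t - t₁ + t₁ = t := by ring
  rw [hteq] at hco
  set u' : ℝ → U := fun s => u (s + t₁) with hu'
  have hu'mem : u' ∈ S.inputs := S.shift_mem u hu t₁ ht₁0
  have hu'norm : S.inNorm u' ≤ r := S.shift_norm_le u hu t₁ ht₁0
  have hbound := hUGS (S.flow t₁ x₀ u) u' hu'mem (t - t₁) htt
  rw [hco]
  have hu'nn : 0 ≤ S.inNorm u' := S.inNorm_nonneg u' hu'mem
  have hγle : γ (S.inNorm u') ≤ γ r := by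
    rcases eq_or_lt_of_le hu'norm with h | h
    · rw [h]
    · exact (hγ.2.1 hu'nn (le_trans hu'nn hu'norm) h).le
  have hσle : σ ‖S.flow t₁ x₀ u‖ ≤ σ (c + γbar r) := by
    rcases eq_or_lt_of_le ht₁n.le with h | h
    · rw [h]
    · exact (hσ.2.1 (norm_nonneg _) (by simp [mem_Ici]; linarith) h).le
  calc ‖S.flow (t - t₁) (S.flow t₁ x₀ u) u'‖
      ≤ σ ‖S.flow t₁ x₀ u‖ + γ (S.inNorm u') := hbound
    _ ≤ σ (c + γbar r) + γ r := add_le_add hσle hγle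
    _ ≤ (ε + σ (2 * γbar r)) + γ r := by linarith
    _ = ε + (σ (2 * γbar r) + γ r) := by ring

/-- If `𝔖` is uniformly globally stable (with gains `σ̲, γ̲ ∈ 𝒦`) and has the
weak limit property (with gain `γ̄ ∈ 𝒦`), then `𝔖` is uniformly globally stable and has the
weak asymptotic gain property; moreover `r ↦ σ̲(2 γ̄ r) + γ̲ r` is a weak asymptotic gain. -/
theorem ugs_weakLimit_implies_weakAG
    (S : DynSysWithInputs X U) (σ γ γbar : ℝ → ℝ)
    (hσ : ClassK σ) (hγ : ClassK γ) (hγbar : ClassK γbar)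
    (hUGS : UGSWith S σ γ) (hWL : WeakLimitWith S γbar) :
    (UGS S ∧ WeakAG S) ∧ WeakAGWith S (fun r => σ (2 * γbar r) + γ r) := by
  have hmain := weakAG_main S σ γ γbar hσ hγ hγbar hUGS hWL
  exact ⟨⟨⟨σ, γ, hσ, hγ, hUGS⟩,
    ⟨_, Or.inl (classK_comp_gain hσ hγ hγbar), hmain⟩⟩, hmain⟩
end
end

section
/- Let 𝔖 = (X, 𝒰, φ) be a dynamical system with inputs. If 𝔖 is uniformly globally stable and has the weak asymptotic gain property, then there exist σ, γ ∈ 𝒦 and a function β : X × 𝒰 × [0,∞) → [0,∞) with β(x₀,u,·) ∈ ℒ whenever x₀ ≠ 0, such that for all (x₀,u) ∈ X × 𝒰 and all t ≥ 0 one has ‖φ(t,x₀,u)‖ ≤ β(x₀,u,t) + γ(‖u‖_𝒰) and β(x₀,u,t) ≤ σ(‖x₀‖). -/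
open MeasureTheory Filter Set Topology
open scoped ENNReal NNReal

noncomputable section

variable {X U : Type*} [NormedAddCommGroup X]

/-- If `𝔖` is uniformly globally stable and has the weak asymptotic gain
property, then there are `σ, γ ∈ 𝒦` and `β : X × 𝒰 × [0,∞) → [0,∞)` with `β(x₀,u,·) ∈ ℒ`
for `x₀ ≠ 0` such that `‖φ(t,x₀,u)‖ ≤ β(x₀,u,t) + γ(‖u‖_𝒰)` and `β(x₀,u,t) ≤ σ(‖x₀‖)`
for all `(x₀,u) ∈ X × 𝒰` and `t ≥ 0`. -/
theorem ugs_weakAG_implies_beta_estimate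
    (S : DynSysWithInputs X U) (hUGS : UGS S) (hWAG : WeakAG S) :
    ∃ (σ γ : ℝ → ℝ) (β : X → (ℝ → U) → ℝ → ℝ),
      ClassK σ ∧ ClassK γ ∧
      (∀ (x₀ : X), ∀ u ∈ S.inputs, x₀ ≠ 0 → ClassL (β x₀ u)) ∧
      (∀ (x₀ : X), ∀ u ∈ S.inputs, ∀ t : ℝ, 0 ≤ t → 0 ≤ β x₀ u t) ∧
      ∀ (x₀ : X), ∀ u ∈ S.inputs, ∀ t : ℝ, 0 ≤ t →
        ‖S.flow t x₀ u‖ ≤ β x₀ u t + γ (S.inNorm u) ∧ β x₀ u t ≤ σ ‖x₀‖ := by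
    classical
  obtain ⟨σ0, γ0, hσ0, hγ0, hU⟩ := hUGS
  obtain ⟨γ1, hγ1, hW⟩ := hWAG
  have hγ1nn : ∀ r, 0 ≤ r → 0 ≤ γ1 r := by
    rcases hγ1 with h1 | h1
    · exact h1.2.2.2
    · intro r _; simp [h1]
  set γ : ℝ → ℝ := fun r => γ0 r + γ1 r with hγdef
  have hγK : ClassK γ := by
    rcases hγ1 with h1 | h1
    · exact ⟨hγ0.1.add h1.1,
        fun a ha b hb hab => add_lt_add (hγ0.2.1 ha hb hab) (h1.2.1 ha hb hab),
        by simp [hγdef, hγ0.2.2.1, h1.2.2.1],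
        fun r hr => add_nonneg (hγ0.2.2.2 r hr) (h1.2.2.2 r hr)⟩
    · refine ⟨?_, ?_, ?_, ?_⟩ <;> simp only [hγdef, h1, add_zero]
      exacts [hγ0.1, hγ0.2.1, hγ0.2.2.1, hγ0.2.2.2]
  set g : X → (ℝ → U) → ℝ → ℝ :=
    fun x₀ u s => max 0 (‖S.flow s x₀ u‖ - γ (S.inNorm u)) with hgdef
  set m : X → (ℝ → U) → ℝ → ℝ :=
    fun x₀ u t => sSup (g x₀ u '' Ici (max t 0)) with hmdef
  set n : X → (ℝ → U) → ℝ → ℝ :=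
    fun x₀ u t => ∫ s in (t-1)..t, m x₀ u s with hndef
  set β : X → (ℝ → U) → ℝ → ℝ :=
    fun x₀ u t => n x₀ u t + σ0 ‖x₀‖ * Real.exp (-t) with hβdef
  have hcnn : ∀ x₀ : X, 0 ≤ σ0 ‖x₀‖ := fun x₀ => hσ0.2.2.2 _ (norm_nonneg x₀)
  have hgnn : ∀ x₀ u s, 0 ≤ g x₀ u s := fun x₀ u s => le_max_left _ _
  have hg_le : ∀ x₀ : X, ∀ u ∈ S.inputs, ∀ s : ℝ, 0 ≤ s → g x₀ u s ≤ σ0 ‖x₀‖ := by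
    intro x₀ u hu s hs
    have h1 := hU x₀ u hu s hs
    have h2 : 0 ≤ γ1 (S.inNorm u) := hγ1nn _ (S.inNorm_nonneg u hu)
    have : γ0 (S.inNorm u) ≤ γ (S.inNorm u) := by simp [hγdef]; linarith
    exact max_le (hcnn x₀) (by linarith)
  have hm_bdd : ∀ x₀ : X, ∀ u ∈ S.inputs, ∀ t : ℝ,
      BddAbove (g x₀ u '' Ici (max t 0)) := by
    intro x₀ u hu t
    refine ⟨σ0 ‖x₀‖, ?_⟩
    rintro y ⟨s, hs, rfl⟩
    exact hg_le x₀ u hu s (le_trans (le_max_right _ _) hs)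
  have hm_ne : ∀ (x₀ : X) (u : ℝ → U) (t : ℝ), (g x₀ u '' Ici (max t 0)).Nonempty :=
    fun x₀ u t => (nonempty_Ici).image _
  have hm_le_c : ∀ x₀ : X, ∀ u ∈ S.inputs, ∀ t : ℝ, m x₀ u t ≤ σ0 ‖x₀‖ := by
    intro x₀ u hu t
    refine csSup_le (hm_ne x₀ u t) ?_
    rintro y ⟨s, hs, rfl⟩
    exact hg_le x₀ u hu s (le_trans (le_max_right _ _) hs)
  have hm_nn : ∀ x₀ : X, ∀ u ∈ S.inputs, ∀ t : ℝ, 0 ≤ m x₀ u t := by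
    intro x₀ u hu t
    have : g x₀ u (max t 0) ∈ g x₀ u '' Ici (max t 0) := ⟨max t 0, self_mem_Ici, rfl⟩
    exact le_trans (hgnn x₀ u (max t 0)) (le_csSup (hm_bdd x₀ u hu t) this)
  have hm_anti : ∀ x₀ : X, ∀ u ∈ S.inputs, Antitone (m x₀ u) := by
    intro x₀ u hu a b hab
    refine csSup_le_csSup (hm_bdd x₀ u hu a) (hm_ne x₀ u b) ?_
    exact image_mono (Ici_subset_Ici.2 (max_le_max hab le_rfl))
  have hg_le_m : ∀ x₀ : X, ∀ u ∈ S.inputs, ∀ t : ℝ, 0 ≤ t →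
      ‖S.flow t x₀ u‖ - γ (S.inNorm u) ≤ m x₀ u t := by
    intro x₀ u hu t ht
    have hmem : g x₀ u t ∈ g x₀ u '' Ici (max t 0) :=
      ⟨t, by simp [max_eq_left ht], rfl⟩
    exact le_trans (le_max_right _ _) (le_csSup (hm_bdd x₀ u hu t) hmem)
  have hm_int : ∀ x₀ : X, ∀ u ∈ S.inputs, ∀ a b : ℝ,
      IntervalIntegrable (m x₀ u) volume a b :=
    fun x₀ u hu a b => (hm_anti x₀ u hu).intervalIntegrable
  have hn_nn : ∀ x₀ : X, ∀ u ∈ S.inputs, ∀ t : ℝ, 0 ≤ n x₀ u t := by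
    intro x₀ u hu t
    exact intervalIntegral.integral_nonneg (by linarith) (fun s _ => hm_nn x₀ u hu s)
  have const_int : ∀ (c t : ℝ), (∫ _ in (t-1)..t, c) = c := by
    intro c t
    rw [intervalIntegral.integral_const, smul_eq_mul]
    ring
  have hn_le_c : ∀ x₀ : X, ∀ u ∈ S.inputs, ∀ t : ℝ, n x₀ u t ≤ σ0 ‖x₀‖ := by
    intro x₀ u hu t
    calc n x₀ u t ≤ ∫ _ in (t-1)..t, σ0 ‖x₀‖ :=
          intervalIntegral.integral_mono_on (by linarith) (hm_int x₀ u hu _ _)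
            intervalIntegrable_const (fun s _ => hm_le_c x₀ u hu s)
      _ = σ0 ‖x₀‖ := const_int _ _
  have hm_le_n : ∀ x₀ : X, ∀ u ∈ S.inputs, ∀ t : ℝ, m x₀ u t ≤ n x₀ u t := by
    intro x₀ u hu t
    calc m x₀ u t = ∫ _ in (t-1)..t, m x₀ u t := (const_int _ _).symm
      _ ≤ n x₀ u t :=
          intervalIntegral.integral_mono_on (by linarith) intervalIntegrable_const
            (hm_int x₀ u hu _ _) (fun s hs => hm_anti x₀ u hu hs.2)
  have hn_le_m : ∀ x₀ : X, ∀ u ∈ S.inputs, ∀ t : ℝ, n x₀ u t ≤ m x₀ u (t-1) := by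
    intro x₀ u hu t
    calc n x₀ u t ≤ ∫ _ in (t-1)..t, m x₀ u (t-1) :=
          intervalIntegral.integral_mono_on (by linarith) (hm_int x₀ u hu _ _)
            intervalIntegrable_const (fun s hs => hm_anti x₀ u hu hs.1)
      _ = m x₀ u (t-1) := const_int _ _
  have hn_anti : ∀ x₀ : X, ∀ u ∈ S.inputs, Antitone (n x₀ u) := by
    intro x₀ u hu a b hab
    have hshift : Antitone (fun s => m x₀ u (s + (b - a))) :=
      fun x y hxy => hm_anti x₀ u hu (by linarith)
    have he1 : a - 1 + (b - a) = b - 1 := by ring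
    have he2 : a + (b - a) = b := by ring
    calc n x₀ u b = ∫ s in (a-1)..a, m x₀ u (s + (b - a)) := by
          rw [intervalIntegral.integral_comp_add_right, he1, he2]
      _ ≤ ∫ s in (a-1)..a, m x₀ u s :=
          intervalIntegral.integral_mono_on (by linarith) hshift.intervalIntegrable
            (hm_int x₀ u hu _ _) (fun s _ => hm_anti x₀ u hu (by linarith))
      _ = n x₀ u a := rfl
  have hn_cont : ∀ x₀ : X, ∀ u ∈ S.inputs, Continuous (n x₀ u) := by
    intro x₀ u hu
    have hF : Continuous (fun b => ∫ s in (0:ℝ)..b, m x₀ u s) :=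
      intervalIntegral.continuous_primitive (fun a b => hm_int x₀ u hu a b) 0
    have : (n x₀ u) = fun t =>
        (∫ s in (0:ℝ)..t, m x₀ u s) - ∫ s in (0:ℝ)..(t-1), m x₀ u s := by
      funext t
      rw [intervalIntegral.integral_interval_sub_left (hm_int x₀ u hu _ _)
        (hm_int x₀ u hu _ _)]
    rw [this]
    exact hF.sub (hF.comp (continuous_id.sub continuous_const))
  have hm_tendsto : ∀ x₀ : X, ∀ u ∈ S.inputs,
      Filter.Tendsto (m x₀ u) Filter.atTop (nhds 0) := by
    intro x₀ u hu
    rw [Metric.tendsto_atTop]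
    intro ε hε
    obtain ⟨τ, hτ0, hτ⟩ := hW (ε/2) (by linarith) x₀ u hu
    refine ⟨τ, fun t ht => ?_⟩
    have hm2 : m x₀ u t ≤ ε/2 := by
      refine csSup_le (hm_ne x₀ u t) ?_
      rintro y ⟨s, hs, rfl⟩
      have hsτ : τ ≤ s := le_trans (le_trans ht (le_max_left _ _)) hs
      have h1 := hτ s hsτ
      have h2 : 0 ≤ γ0 (S.inNorm u) := hγ0.2.2.2 _ (S.inNorm_nonneg u hu)
      have h3 : γ1 (S.inNorm u) ≤ γ (S.inNorm u) := by simp [hγdef]; linarith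
      exact max_le (by linarith) (by linarith)
    have := hm_nn x₀ u hu t
    rw [Real.dist_eq, sub_zero, abs_of_nonneg this]
    linarith
  have hn_tendsto : ∀ x₀ : X, ∀ u ∈ S.inputs,
      Filter.Tendsto (n x₀ u) Filter.atTop (nhds 0) := by
    intro x₀ u hu
    refine squeeze_zero (fun t => hn_nn x₀ u hu t) (fun t => hn_le_m x₀ u hu t) ?_
    have hsub : Filter.Tendsto (fun t : ℝ => t - 1) Filter.atTop Filter.atTop :=
      Filter.tendsto_atTop_add_const_right _ (-1) Filter.tendsto_id
    exact (hm_tendsto x₀ u hu).comp hsub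
  refine ⟨fun r => 2 * σ0 r, γ, β, ?_, hγK, ?_, ?_, ?_⟩
  · exact ⟨(continuousOn_const.mul hσ0.1),
      fun a ha b hb hab => by
        have := hσ0.2.1 ha hb hab
        show 2 * σ0 a < 2 * σ0 b
        linarith,
      by simp [hσ0.2.2.1],
      fun r hr => by have := hσ0.2.2.2 r hr; show (0:ℝ) ≤ 2 * σ0 r; linarith⟩
  · -- ClassL
    intro x₀ u hu hx₀
    have hcpos : 0 < σ0 ‖x₀‖ := by
      have h0 : (0:ℝ) ∈ Ici (0:ℝ) := self_mem_Ici
      have h1 : ‖x₀‖ ∈ Ici (0:ℝ) := norm_nonneg x₀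
      have := hσ0.2.1 h0 h1 (norm_pos_iff.2 hx₀)
      rwa [hσ0.2.2.1] at this
    refine ⟨?_, ?_, ?_, ?_⟩
    · exact ((hn_cont x₀ u hu).add
        (continuous_const.mul (Real.continuous_exp.comp continuous_neg))).continuousOn
    · intro a _ b _ hab
      have h1 : n x₀ u b ≤ n x₀ u a := hn_anti x₀ u hu hab.le
      have h2 : Real.exp (-b) < Real.exp (-a) := Real.exp_lt_exp.2 (by linarith)
      have h3 : σ0 ‖x₀‖ * Real.exp (-b) < σ0 ‖x₀‖ * Real.exp (-a) :=
        mul_lt_mul_of_pos_left h2 hcpos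
      simp only [hβdef]
      linarith
    · intro r _
      exact add_nonneg (hn_nn x₀ u hu r) (mul_nonneg (hcnn x₀) (Real.exp_nonneg _))
    · have h2 : Filter.Tendsto (fun t : ℝ => σ0 ‖x₀‖ * Real.exp (-t))
          Filter.atTop (nhds 0) := by
        have := Real.tendsto_exp_neg_atTop_nhds_zero
        simpa using this.const_mul (σ0 ‖x₀‖)
      simpa using (hn_tendsto x₀ u hu).add h2
  · intro x₀ u hu t _
    exact add_nonneg (hn_nn x₀ u hu t) (mul_nonneg (hcnn x₀) (Real.exp_nonneg _))
  · intro x₀ u hu t ht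
    constructor
    · have h1 := hg_le_m x₀ u hu t ht
      have h2 := hm_le_n x₀ u hu t
      have h3 : 0 ≤ σ0 ‖x₀‖ * Real.exp (-t) :=
        mul_nonneg (hcnn x₀) (Real.exp_nonneg _)
      simp only [hβdef]
      linarith
    · have h1 := hn_le_c x₀ u hu t
      have h2 : Real.exp (-t) ≤ 1 := Real.exp_le_one_iff.2 (by linarith)
      have h3 : σ0 ‖x₀‖ * Real.exp (-t) ≤ σ0 ‖x₀‖ := by
        nlinarith [hcnn x₀]
      simp only [hβdef]
      linarith
end
end

section
/- Let 𝔖 = (X, 𝒰, φ) be a dynamical system with inputs. Then the following are equivalent: (a) 𝔖 is weakly input-to-state stable, i.e., uniformly globally stable and of weak asymptotic gain; (b) 𝔖 is uniformly globally stable and has the weak limit property; (c) there exist σ, γ ∈ 𝒦 and β : X × 𝒰 × [0,∞) → [0,∞) with β(x₀,u,·) ∈ ℒ for x₀ ≠ 0 such that for all (x₀,u) ∈ X × 𝒰 and all t ≥ 0 one has ‖φ(t,x₀,u)‖ ≤ β(x₀,u,t) + γ(‖u‖_𝒰) and β(x₀,u,t) ≤ σ(‖x₀‖). -/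
open MeasureTheory Filter Set Topology
open scoped ENNReal NNReal

noncomputable section

variable {X U : Type*} [NormedAddCommGroup X]

lemma classK_add {a b : ℝ → ℝ} (ha : ClassK a) (hb : ClassK b) :
    ClassK (fun r => a r + b r) := by
  refine ⟨ha.1.add hb.1, fun x hx y hy hxy => ?_, by simp [ha.2.2.1, hb.2.2.1],
    fun r hr => add_nonneg (ha.2.2.2 r hr) (hb.2.2.2 r hr)⟩
  exact add_lt_add (ha.2.1 hx hy hxy) (hb.2.1 hx hy hxy)

lemma classK_id : ClassK (fun r : ℝ => r) :=
  ⟨continuousOn_id, fun _ _ _ _ h => h, rfl, fun _ h => h⟩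

lemma classKZero_nonneg {a : ℝ → ℝ} (ha : ClassKZero a) (r : ℝ) (hr : 0 ≤ r) : 0 ≤ a r := by
  rcases ha with h | h
  · exact h.2.2.2 r hr
  · simp [h r]

lemma classKZero_add_id {a : ℝ → ℝ} (ha : ClassKZero a) : ClassK (fun r => a r + r) := by
  rcases ha with h | h
  · exact classK_add h classK_id
  · simpa [h] using classK_id

lemma classK_mono {a : ℝ → ℝ} (ha : ClassK a) : MonotoneOn a (Ici 0) := ha.2.1.monotoneOn

lemma classK_comp {a b : ℝ → ℝ} (ha : ClassK a) (hb : ClassK b) :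
    ClassK (fun r => a (b r)) := by
  have hmaps : MapsTo b (Ici 0) (Ici 0) := fun x hx => hb.2.2.2 x hx
  refine ⟨ha.1.comp hb.1 hmaps, ha.2.1.comp hb.2.1 hmaps, by simp [hb.2.2.1, ha.2.2.1],
    fun r hr => ha.2.2.2 _ (hb.2.2.2 r hr)⟩

lemma classK_two_mul {b : ℝ → ℝ} (hb : ClassK b) : ClassK (fun r => 2 * b r) := by
  refine ⟨continuous_const.continuousOn.mul hb.1,
    fun x hx y hy h => by dsimp only; linarith [hb.2.1 hx hy h],
    by simp [hb.2.2.1], fun r hr => by dsimp only; linarith [hb.2.2.2 r hr]⟩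

/-- Key construction: an upper envelope of `f` that is Lipschitz, antitone,
bounded by `M`, and tends to 0. -/
lemma keyB {f : ℝ → ℝ} {M : ℝ} (hM : 0 ≤ M) (hf0 : ∀ s, 0 ≤ s → 0 ≤ f s)
    (hfM : ∀ s, 0 ≤ s → f s ≤ M)
    (hlim : ∀ ε, 0 < ε → ∃ τ, 0 ≤ τ ∧ ∀ s, τ ≤ s → f s ≤ ε) :
    (∀ t, 0 ≤ t → f t ≤ sSup ((fun s => f s - max (t - s) 0) '' Ici 0)) ∧
    (∀ t, sSup ((fun s => f s - max (t - s) 0) '' Ici 0) ≤ M) ∧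
    (∀ t, 0 ≤ t → 0 ≤ sSup ((fun s => f s - max (t - s) 0) '' Ici 0)) ∧
    Antitone (fun t => sSup ((fun s => f s - max (t - s) 0) '' Ici 0)) ∧
    Continuous (fun t => sSup ((fun s => f s - max (t - s) 0) '' Ici 0)) ∧
    Tendsto (fun t => sSup ((fun s => f s - max (t - s) 0) '' Ici 0)) atTop (nhds 0) := by
  set B : ℝ → ℝ := fun t => sSup ((fun s => f s - max (t - s) 0) '' Ici 0) with hB
  have hne : ∀ t : ℝ, ((fun s => f s - max (t - s) 0) '' Ici 0).Nonempty :=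
    fun t => ⟨_, mem_image_of_mem _ (self_mem_Ici)⟩
  have hub : ∀ t : ℝ, ∀ y ∈ (fun s => f s - max (t - s) 0) '' Ici 0, y ≤ M := by
    rintro t y ⟨s, hs, rfl⟩
    dsimp only
    have := hfM s hs
    have : f s - max (t - s) 0 ≤ f s := by
      have := le_max_right (t - s) 0; linarith
    linarith [hfM s hs]
  have hbdd : ∀ t : ℝ, BddAbove ((fun s => f s - max (t - s) 0) '' Ici 0) :=
    fun t => ⟨M, fun y hy => hub t y hy⟩
  have hge : ∀ t, 0 ≤ t → f t ≤ B t := by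
    intro t ht
    have : f t - max (t - t) 0 ≤ B t := le_csSup (hbdd t) (mem_image_of_mem _ ht)
    simpa using this
  have hle : ∀ t, B t ≤ M := fun t => csSup_le (hne t) (hub t)
  have hnn : ∀ t, 0 ≤ t → 0 ≤ B t := fun t ht => le_trans (hf0 t ht) (hge t ht)
  have hanti : Antitone B := by
    intro t₁ t₂ h
    refine csSup_le (hne t₂) ?_
    rintro y ⟨s, hs, rfl⟩
    dsimp only
    have hcs : f s - max (t₁ - s) 0 ≤ B t₁ := le_csSup (hbdd t₁) (mem_image_of_mem _ hs)
    have : max (t₁ - s) 0 ≤ max (t₂ - s) 0 := max_le_max (by linarith) le_rfl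
    linarith
  have hlip : ∀ t₁ t₂ : ℝ, B t₁ ≤ B t₂ + |t₁ - t₂| := by
    intro t₁ t₂
    refine csSup_le (hne t₁) ?_
    rintro y ⟨s, hs, rfl⟩
    have h1 : max (t₂ - s) 0 ≤ max (t₁ - s) 0 + |t₁ - t₂| := by
      rcases abs_cases (t₁ - t₂) with ⟨he, _⟩ | ⟨he, _⟩ <;>
        [skip; skip] <;>
      · rw [he]
        rcases le_total (t₂ - s) 0 with h | h <;> rcases le_total (t₁ - s) 0 with h' | h' <;>
          simp [max_eq_left, max_eq_right, *] <;> linarith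
    have hcs : f s - max (t₂ - s) 0 ≤ B t₂ := le_csSup (hbdd t₂) (mem_image_of_mem _ hs)
    dsimp only
    linarith
  have hcont : Continuous B := by
    have : LipschitzWith 1 B := by
      refine LipschitzWith.of_dist_le_mul ?_
      intro x y
      rw [Real.dist_eq, Real.dist_eq]
      rw [abs_sub_le_iff]
      constructor
      · have := hlip x y; rw [abs_sub_comm] at this ⊢; simp only [NNReal.coe_one, one_mul]; linarith [hlip x y, abs_sub_comm x y]
      · have := hlip y x; simp only [NNReal.coe_one, one_mul]
        calc B y - B x ≤ |y - x| := by linarith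
        _ = |x - y| := abs_sub_comm y x
    exact this.continuous
  have htend : Tendsto B atTop (nhds 0) := by
    rw [Metric.tendsto_atTop]
    intro ε hε
    obtain ⟨τ, hτ, hτ'⟩ := hlim (ε / 2) (by linarith)
    refine ⟨τ + M, fun t ht => ?_⟩
    have ht0 : 0 ≤ t := le_trans (by linarith) ht
    have hBle : B t ≤ ε / 2 := by
      refine csSup_le (hne t) ?_
      rintro y ⟨s, hs, rfl⟩
      dsimp only
      rcases le_total τ s with h | h
      · have := hτ' s h
        have := le_max_right (t - s) 0
        linarith
      · have h1 : max (t - s) 0 = t - s := max_eq_left (by linarith)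
        have := hfM s hs
        rw [h1]; linarith
    rw [Real.dist_eq, sub_zero, abs_of_nonneg (hnn t ht0)]
    linarith
  exact ⟨hge, hle, hnn, hanti, hcont, htend⟩


section Aux
variable {X U : Type*} [NormedAddCommGroup X]

lemma aux_weakLimit (S : DynSysWithInputs X U) (h : WeakAG S) : WeakLimit S := by
  obtain ⟨γb, hγb, hAG⟩ := h
  refine ⟨fun r => γb r + r, classKZero_add_id hγb, ?_⟩
  intro ε hε x₀ u hu
  obtain ⟨τ, hτ, hb⟩ := hAG ε hε x₀ u hu
  refine ⟨τ, hτ, ?_⟩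
  have hmem : ‖S.flow τ x₀ u‖ ∈ (fun t => ‖S.flow t x₀ u‖) '' Icc (0:ℝ) τ :=
    mem_image_of_mem _ (right_mem_Icc.mpr hτ)
  have hbdd : BddBelow ((fun t => ‖S.flow t x₀ u‖) '' Icc (0:ℝ) τ) := by
    refine ⟨0, ?_⟩; rintro y ⟨s, hs, rfl⟩; exact norm_nonneg _
  have h1 : sInf ((fun t => ‖S.flow t x₀ u‖) '' Icc (0:ℝ) τ) ≤ ‖S.flow τ x₀ u‖ :=
    csInf_le hbdd hmem
  have h2 := hb τ le_rfl
  have h3 : 0 ≤ S.inNorm u := S.inNorm_nonneg u hu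
  dsimp only
  linarith

lemma aux_weakAG (S : DynSysWithInputs X U) (hU : UGS S) (hW : WeakLimit S) : WeakAG S := by
  obtain ⟨σ, γU, hσ, hγU, hUGS⟩ := hU
  obtain ⟨γW, hγW, hWL⟩ := hW
  refine ⟨fun r => σ (2 * γW r) + γU r,
    Or.inl (classK_add (classK_comp hσ (classK_two_mul hγW)) hγU), ?_⟩
  intro ε hε x₀ u hu
  have hσ0 : Tendsto σ (nhdsWithin 0 (Ici 0)) (nhds 0) := by
    have := hσ.1 0 self_mem_Ici
    rwa [ContinuousWithinAt, hσ.2.2.1] at this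
  rw [Metric.tendsto_nhdsWithin_nhds] at hσ0
  obtain ⟨δ, hδ, hδ'⟩ := hσ0 ε hε
  set ε₁ := δ / 8 with hε₁def
  have hε₁pos : 0 < ε₁ := by positivity
  have hσ4 : σ (4 * ε₁) < ε := by
    have h1 : dist (4 * ε₁) (0:ℝ) < δ := by
      rw [Real.dist_eq, sub_zero, abs_of_nonneg (by positivity)]
      rw [hε₁def]; linarith
    have := hδ' (mem_Ici.mpr (by positivity)) h1
    rw [Real.dist_eq, sub_zero] at this
    exact lt_of_le_of_lt (le_abs_self _) this
  obtain ⟨τ, hτ, hInf⟩ := hWL ε₁ hε₁pos x₀ u hu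
  set c := γW (S.inNorm u) with hc
  have hc0 : 0 ≤ c := hγW.2.2.2 _ (S.inNorm_nonneg u hu)
  have hne : ((fun t => ‖S.flow t x₀ u‖) '' Icc (0:ℝ) τ).Nonempty :=
    ⟨_, mem_image_of_mem _ (left_mem_Icc.mpr hτ)⟩
  have hlt : sInf ((fun t => ‖S.flow t x₀ u‖) '' Icc (0:ℝ) τ) < 2 * ε₁ + c :=
    lt_of_le_of_lt hInf (by linarith)
  obtain ⟨y, hymem, hy⟩ := exists_lt_of_csInf_lt hne hlt
  obtain ⟨t₀, ht₀, rfl⟩ := hymem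
  refine ⟨τ, hτ, fun t ht => ?_⟩
  have ht₀0 : 0 ≤ t₀ := ht₀.1
  have htt : t₀ ≤ t := le_trans ht₀.2 ht
  have hco := S.cocycle x₀ u hu t₀ (t - t₀) ht₀0 (by linarith)
  rw [sub_add_cancel] at hco
  have hushmem : (fun r => u (r + t₀)) ∈ S.inputs := S.shift_mem u hu t₀ ht₀0
  have hUGSb := hUGS (S.flow t₀ x₀ u) (fun r => u (r + t₀)) hushmem (t - t₀) (by linarith)
  rw [← hco] at hUGSb
  have hγUm : γU (S.inNorm (fun r => u (r + t₀))) ≤ γU (S.inNorm u) :=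
    classK_mono hγU (mem_Ici.mpr (S.inNorm_nonneg _ hushmem))
      (mem_Ici.mpr (S.inNorm_nonneg u hu)) (S.shift_norm_le u hu t₀ ht₀0)
  have hy0 : (0:ℝ) ≤ ‖S.flow t₀ x₀ u‖ := norm_nonneg _
  have hσm : σ ‖S.flow t₀ x₀ u‖ ≤ σ (2 * ε₁ + c) :=
    classK_mono hσ (mem_Ici.mpr hy0) (mem_Ici.mpr (by linarith)) hy.le
  have hkey : σ (2 * ε₁ + c) ≤ σ (4 * ε₁) + σ (2 * c) := by
    rcases le_total (2 * ε₁) c with h | h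
    · have h1 : σ (2 * ε₁ + c) ≤ σ (2 * c) :=
        classK_mono hσ (mem_Ici.mpr (by linarith)) (mem_Ici.mpr (by linarith)) (by linarith)
      have h2 : 0 ≤ σ (4 * ε₁) := hσ.2.2.2 _ (by positivity)
      linarith
    · have h1 : σ (2 * ε₁ + c) ≤ σ (4 * ε₁) :=
        classK_mono hσ (mem_Ici.mpr (by linarith)) (mem_Ici.mpr (by positivity)) (by linarith)
      have h2 : 0 ≤ σ (2 * c) := hσ.2.2.2 _ (by linarith)
      linarith
  dsimp only
  rw [← hc]
  linarith

lemma aux_to_estimate (S : DynSysWithInputs X U) (h : WeakISS S) :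
    ∃ (σ γ : ℝ → ℝ) (β : X → (ℝ → U) → ℝ → ℝ),
      ClassK σ ∧ ClassK γ ∧
      (∀ (x₀ : X), ∀ u ∈ S.inputs, x₀ ≠ 0 → ClassL (β x₀ u)) ∧
      (∀ (x₀ : X), ∀ u ∈ S.inputs, ∀ t : ℝ, 0 ≤ t → 0 ≤ β x₀ u t) ∧
      ∀ (x₀ : X), ∀ u ∈ S.inputs, ∀ t : ℝ, 0 ≤ t →
        ‖S.flow t x₀ u‖ ≤ β x₀ u t + γ (S.inNorm u) ∧ β x₀ u t ≤ σ ‖x₀‖ := by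
  obtain ⟨⟨σ, γU, hσ, hγU, hUGS⟩, γb, hγb, hAG⟩ := h
  set γtot : ℝ → ℝ := fun r => γU r + (γb r + r) with hγtdef
  have hγtotK : ClassK γtot := classK_add hγU (classKZero_add_id hγb)
  have key : ∀ (x₀ : X), ∀ u ∈ S.inputs,
      (∀ t, 0 ≤ t → max (‖S.flow t x₀ u‖ - γtot (S.inNorm u)) 0 ≤
        sSup ((fun s => max (‖S.flow s x₀ u‖ - γtot (S.inNorm u)) 0 - max (t - s) 0) '' Ici 0)) ∧
      (∀ t, sSup ((fun s => max (‖S.flow s x₀ u‖ - γtot (S.inNorm u)) 0 - max (t - s) 0) '' Ici 0)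
        ≤ σ ‖x₀‖) ∧
      (∀ t, 0 ≤ t → 0 ≤
        sSup ((fun s => max (‖S.flow s x₀ u‖ - γtot (S.inNorm u)) 0 - max (t - s) 0) '' Ici 0)) ∧
      Antitone (fun t =>
        sSup ((fun s => max (‖S.flow s x₀ u‖ - γtot (S.inNorm u)) 0 - max (t - s) 0) '' Ici 0)) ∧
      Continuous (fun t =>
        sSup ((fun s => max (‖S.flow s x₀ u‖ - γtot (S.inNorm u)) 0 - max (t - s) 0) '' Ici 0)) ∧
      Tendsto (fun t =>
        sSup ((fun s => max (‖S.flow s x₀ u‖ - γtot (S.inNorm u)) 0 - max (t - s) 0) '' Ici 0))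
        atTop (nhds 0) := by
    intro x₀ u hu
    have hn : 0 ≤ S.inNorm u := S.inNorm_nonneg u hu
    have hbn : 0 ≤ γb (S.inNorm u) := classKZero_nonneg hγb _ hn
    have hUn : 0 ≤ γU (S.inNorm u) := hγU.2.2.2 _ hn
    have hM : (0:ℝ) ≤ σ ‖x₀‖ := hσ.2.2.2 _ (norm_nonneg _)
    refine keyB hM (fun s _ => le_max_right _ _) ?_ ?_
    · intro s hs
      have h1 := hUGS x₀ u hu s hs
      refine max_le ?_ hM
      have : γU (S.inNorm u) ≤ γtot (S.inNorm u) := by rw [hγtdef]; dsimp only; linarith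
      linarith
    · intro ε hε
      obtain ⟨τ, hτ, hb⟩ := hAG ε hε x₀ u hu
      refine ⟨τ, hτ, fun s hs => max_le ?_ hε.le⟩
      have h1 := hb s hs
      have : γb (S.inNorm u) ≤ γtot (S.inNorm u) := by rw [hγtdef]; dsimp only; linarith
      linarith
  refine ⟨fun r => σ r + σ r, γtot, fun x₀ u t =>
    sSup ((fun s => max (‖S.flow s x₀ u‖ - γtot (S.inNorm u)) 0 - max (t - s) 0) '' Ici 0)
      + σ ‖x₀‖ * Real.exp (-t), classK_add hσ hσ, hγtotK, ?_, ?_, ?_⟩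
  · intro x₀ u hu hx
    obtain ⟨hge, hle, hnn, hanti, hcont, htend⟩ := key x₀ u hu
    have hMpos : 0 < σ ‖x₀‖ := by
      have := hσ.2.1 self_mem_Ici (mem_Ici.mpr (norm_nonneg x₀)) (norm_pos_iff.mpr hx)
      rwa [hσ.2.2.1] at this
    refine ⟨?_, ?_, ?_, ?_⟩
    · exact (hcont.add (continuous_const.mul (Real.continuous_exp.comp continuous_neg))).continuousOn
    · intro a _ b _ hab
      dsimp only
      have h1 := hanti hab.le
      have h2 : Real.exp (-b) < Real.exp (-a) := Real.exp_lt_exp.mpr (by linarith)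
      have h3 := mul_lt_mul_of_pos_left h2 hMpos
      dsimp only at h1
      linarith
    · intro r hr
      have := hnn r hr
      dsimp only
      positivity
    · have h2 : Tendsto (fun t => σ ‖x₀‖ * Real.exp (-t)) atTop (nhds 0) := by
        simpa using (Real.tendsto_exp_neg_atTop_nhds_zero.const_mul (σ ‖x₀‖))
      simpa using htend.add h2
  · intro x₀ u hu t ht
    obtain ⟨hge, hle, hnn, hanti, hcont, htend⟩ := key x₀ u hu
    have hM : (0:ℝ) ≤ σ ‖x₀‖ := hσ.2.2.2 _ (norm_nonneg _)
    have := hnn t ht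
    positivity
  · intro x₀ u hu t ht
    obtain ⟨hge, hle, hnn, hanti, hcont, htend⟩ := key x₀ u hu
    have hM : (0:ℝ) ≤ σ ‖x₀‖ := hσ.2.2.2 _ (norm_nonneg _)
    have hexp : Real.exp (-t) ≤ 1 := Real.exp_le_one_iff.mpr (by linarith)
    have hexp0 : (0:ℝ) ≤ Real.exp (-t) := (Real.exp_pos _).le
    constructor
    · have h1 := hge t ht
      have h2 : ‖S.flow t x₀ u‖ - γtot (S.inNorm u) ≤
          max (‖S.flow t x₀ u‖ - γtot (S.inNorm u)) 0 := le_max_left _ _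
      have h3 : 0 ≤ σ ‖x₀‖ * Real.exp (-t) := by positivity
      dsimp only
      linarith
    · have h1 := hle t
      have h2 : σ ‖x₀‖ * Real.exp (-t) ≤ σ ‖x₀‖ * 1 := mul_le_mul_of_nonneg_left hexp hM
      dsimp only
      linarith

lemma aux_of_estimate (S : DynSysWithInputs X U)
    (h : ∃ (σ γ : ℝ → ℝ) (β : X → (ℝ → U) → ℝ → ℝ),
      ClassK σ ∧ ClassK γ ∧
      (∀ (x₀ : X), ∀ u ∈ S.inputs, x₀ ≠ 0 → ClassL (β x₀ u)) ∧
      (∀ (x₀ : X), ∀ u ∈ S.inputs, ∀ t : ℝ, 0 ≤ t → 0 ≤ β x₀ u t) ∧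
      ∀ (x₀ : X), ∀ u ∈ S.inputs, ∀ t : ℝ, 0 ≤ t →
        ‖S.flow t x₀ u‖ ≤ β x₀ u t + γ (S.inNorm u) ∧ β x₀ u t ≤ σ ‖x₀‖) :
    WeakISS S := by
  obtain ⟨σ, γ, β, hσ, hγ, hL, hβnn, hest⟩ := h
  constructor
  · refine ⟨σ, γ, hσ, hγ, fun x₀ u hu t ht => ?_⟩
    have h1 := (hest x₀ u hu t ht).1
    have h2 := (hest x₀ u hu t ht).2
    linarith
  · refine ⟨γ, Or.inl hγ, ?_⟩
    intro ε hε x₀ u hu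
    by_cases hx : x₀ = 0
    · subst hx
      refine ⟨0, le_rfl, fun t ht => ?_⟩
      have h1 := (hest 0 u hu t ht).1
      have h2 := (hest 0 u hu t ht).2
      rw [norm_zero, hσ.2.2.1] at h2
      linarith
    · obtain ⟨_, _, _, htend⟩ := hL x₀ u hu hx
      rw [Metric.tendsto_atTop] at htend
      obtain ⟨T, hT⟩ := htend ε hε
      refine ⟨max T 0, le_max_right _ _, fun t ht => ?_⟩
      have ht0 : 0 ≤ t := le_trans (le_max_right T 0) ht
      have h1 := (hest x₀ u hu t ht0).1
      have h2 := hT t (le_trans (le_max_left T 0) ht)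
      rw [Real.dist_eq, sub_zero] at h2
      have h3 : β x₀ u t < ε := lt_of_le_of_lt (le_abs_self _) h2
      linarith

end Aux

/-- Characterization of weak input-to-state stability: `𝔖` is weakly
input-to-state stable iff it is uniformly globally stable and has the weak limit property,
iff there is a `𝒦ℒ`-type estimate `‖φ(t,x₀,u)‖ ≤ β(x₀,u,t) + γ(‖u‖_𝒰)` with
`β(x₀,u,t) ≤ σ(‖x₀‖)` and `β(x₀,u,·) ∈ ℒ` for `x₀ ≠ 0`. -/
theorem weakISS_characterization (S : DynSysWithInputs X U) :
    (WeakISS S ↔ (UGS S ∧ WeakLimit S)) ∧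
    (WeakISS S ↔
      ∃ (σ γ : ℝ → ℝ) (β : X → (ℝ → U) → ℝ → ℝ),
        ClassK σ ∧ ClassK γ ∧
        (∀ (x₀ : X), ∀ u ∈ S.inputs, x₀ ≠ 0 → ClassL (β x₀ u)) ∧
        (∀ (x₀ : X), ∀ u ∈ S.inputs, ∀ t : ℝ, 0 ≤ t → 0 ≤ β x₀ u t) ∧
        ∀ (x₀ : X), ∀ u ∈ S.inputs, ∀ t : ℝ, 0 ≤ t →
          ‖S.flow t x₀ u‖ ≤ β x₀ u t + γ (S.inNorm u) ∧ β x₀ u t ≤ σ ‖x₀‖) := by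
  constructor
  · exact ⟨fun h => ⟨h.1, aux_weakLimit S h.2⟩, fun h => ⟨h.1, aux_weakAG S h.1 h.2⟩⟩
  · exact ⟨fun h => aux_to_estimate S h, fun h => aux_of_estimate S h⟩
end
end

section
/- Let p ∈ [1,∞) ∪ {∞}, let α : ℝ → [0,∞) satisfy α(0) = 0, and suppose the set 𝒰 := { u ∈ L^p([0,∞),ℝ) : α∘u is locally integrable and ∫₀^∞ α(u(s)) ds = ∞ }, equipped with ‖·‖_𝒰 := ‖·‖_{L^p}, is nonempty. Let X be a Banach space and let (T_t)_{t≥0} be a strongly stable C₀-semigroup on X, and define φ(t,x₀,u) := T_{∫₀^t α(u(s)) ds} x₀ for (t,x₀,u) ∈ [0,∞) × X × 𝒰. Then 𝔖 := (X,𝒰,φ) is a dynamical system with inputs, M := sup_{v ≥ 0} ‖T_v‖ < ∞, 𝔖 is uniformly globally stable (with σ̲(r) = M·r and any γ̲ ∈ 𝒦), and 𝔖 is of weak asymptotic gain 0; in particular 𝔖 is weakly input-to-state stable. -/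
open MeasureTheory Filter Set Topology
open scoped ENNReal NNReal

noncomputable section

variable {X U : Type*} [NormedAddCommGroup X]

/-- The input space of the modulated-linear counterexample: `u ∈ L^p([0,∞),ℝ)` such that
`α ∘ u` is locally integrable on `[0,∞)` but `∫₀^∞ α(u(s)) ds = ∞`. -/
def ModulInputs (p : ℝ≥0∞) (α : ℝ → ℝ) : Set (ℝ → ℝ) :=
  {u | MemLp u p (volume.restrict (Ici (0:ℝ))) ∧
       LocallyIntegrableOn (fun s => α (u s)) (Ici (0:ℝ)) volume ∧
       ∫⁻ s in Ici (0:ℝ), ENNReal.ofReal (α (u s)) = ⊤}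

namespace ModAux

lemma embed (τ : ℝ) : MeasurableEmbedding (fun x : ℝ => x + τ) :=
  (Homeomorph.addRight τ).measurableEmbedding

lemma map_shift_restrict (τ : ℝ) (s : Set ℝ) (hs : MeasurableSet s) :
    Measure.map (fun x => x + τ) ((volume : Measure ℝ).restrict ((fun x => x + τ) ⁻¹' s))
      = volume.restrict s := by
  rw [← Measure.restrict_map (measurable_add_const τ) hs, map_add_right_eq_self]

lemma pre_Ici (τ c : ℝ) : (fun x : ℝ => x + τ) ⁻¹' Ici (c + τ) = Ici c := by
  ext x; simp [mem_preimage, mem_Ici]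

lemma pre_Icc (τ a b : ℝ) : (fun x : ℝ => x + τ) ⁻¹' Icc (a + τ) (b + τ) = Icc a b := by
  ext x; simp [mem_preimage, mem_Icc]

lemma integrableOn_comp_shift {g : ℝ → ℝ} {τ : ℝ} {s : Set ℝ} (hs : MeasurableSet s) :
    IntegrableOn (fun x => g (x + τ)) ((fun x => x + τ) ⁻¹' s) volume ↔
      IntegrableOn g s volume := by
  rw [IntegrableOn, IntegrableOn, ← map_shift_restrict τ s hs, (embed τ).integrable_map_iff]
  exact Iff.rfl

lemma lintegral_comp_shift {g : ℝ → ℝ≥0∞} {τ : ℝ} {s : Set ℝ} (hs : MeasurableSet s)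
    (hg : AEMeasurable g (volume.restrict s)) :
    ∫⁻ x in s, g x = ∫⁻ x in (fun x : ℝ => x + τ) ⁻¹' s, g (x + τ) := by
  conv_lhs => rw [← map_shift_restrict τ s hs]
  rw [lintegral_map' (by rwa [map_shift_restrict τ s hs]) (measurable_add_const τ).aemeasurable]

lemma memℒp_comp_shift {p : ℝ≥0∞} {g : ℝ → ℝ} {τ : ℝ} {s : Set ℝ} (hs : MeasurableSet s) :
    MemLp (fun x => g (x + τ)) p (volume.restrict ((fun x : ℝ => x + τ) ⁻¹' s)) ↔
      MemLp g p (volume.restrict s) := by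
  rw [← map_shift_restrict τ s hs, (embed τ).memLp_map_measure_iff]
  exact Iff.rfl

lemma eLpNorm_comp_shift {p : ℝ≥0∞} (g : ℝ → ℝ) (τ : ℝ) {s : Set ℝ} (hs : MeasurableSet s) :
    eLpNorm (fun x => g (x + τ)) p (volume.restrict ((fun x : ℝ => x + τ) ⁻¹' s)) =
      eLpNorm g p (volume.restrict s) := by
  rw [← map_shift_restrict τ s hs, (embed τ).eLpNorm_map_measure]
  exact rfl

variable {p : ℝ≥0∞} {α : ℝ → ℝ} {u : ℝ → ℝ}

lemma intInt (hu : u ∈ ModulInputs p α) {a b : ℝ} (ha : 0 ≤ a) (hb : 0 ≤ b) :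
    IntervalIntegrable (fun s => α (u s)) volume a b := by
  rw [intervalIntegrable_iff]
  refine (hu.2.1.integrableOn_compact_subset ?_ isCompact_uIcc).mono_set Ioc_subset_Icc_self
  intro x hx
  exact le_trans (le_min ha hb) hx.1

lemma Vnonneg (hαnn : ∀ r, 0 ≤ α r) {t : ℝ} (ht : 0 ≤ t) :
    0 ≤ ∫ s in (0:ℝ)..t, α (u s) :=
  intervalIntegral.integral_nonneg ht fun s _ => hαnn _

lemma Vmono (hαnn : ∀ r, 0 ≤ α r) (hu : u ∈ ModulInputs p α) {s t : ℝ}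
    (hs : 0 ≤ s) (hst : s ≤ t) :
    (∫ r in (0:ℝ)..s, α (u r)) ≤ ∫ r in (0:ℝ)..t, α (u r) := by
  have h1 := intervalIntegral.integral_add_adjacent_intervals (μ := volume)
    (intInt hu le_rfl hs) (intInt hu hs (hs.trans hst))
  have h2 : 0 ≤ ∫ r in s..t, α (u r) :=
    intervalIntegral.integral_nonneg hst fun r _ => hαnn _
  linarith

lemma Vcont (hu : u ∈ ModulInputs p α) :
    ContinuousOn (fun t => ∫ s in (0:ℝ)..t, α (u s)) (Ici 0) := by
  intro t₀ ht₀
  have hb : t₀ < t₀ + 1 := by linarith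
  have hint : IntegrableOn (fun s => α (u s)) (Icc 0 (t₀ + 1)) volume :=
    hu.2.1.integrableOn_compact_subset (fun x hx => hx.1) isCompact_Icc
  have hcont : ContinuousOn (fun x => ∫ s in Ioc (0:ℝ) x, α (u s)) (Icc 0 (t₀ + 1)) :=
    intervalIntegral.continuousOn_primitive hint
  have heq : EqOn (fun t => ∫ s in (0:ℝ)..t, α (u s))
      (fun x => ∫ s in Ioc (0:ℝ) x, α (u s)) (Icc 0 (t₀ + 1)) := by
    intro x hx
    simp [intervalIntegral.integral_of_le hx.1]
  have h1 : ContinuousWithinAt (fun t => ∫ s in (0:ℝ)..t, α (u s)) (Icc 0 (t₀+1)) t₀ :=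
    (hcont.congr heq) t₀ ⟨ht₀, hb.le⟩
  refine h1.mono_of_mem_nhdsWithin ?_
  have h2 : Ici (0:ℝ) ∩ Iio (t₀+1) ∈ nhdsWithin t₀ (Ici 0) :=
    inter_mem_nhdsWithin _ (Iio_mem_nhds hb)
  exact Filter.mem_of_superset h2 fun x hx => ⟨hx.1, hx.2.le⟩

lemma Vunbounded (hαnn : ∀ r, 0 ≤ α r) (hu : u ∈ ModulInputs p α) (R : ℝ) :
    ∃ τ : ℝ, 0 ≤ τ ∧ R ≤ ∫ s in (0:ℝ)..τ, α (u s) := by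
  by_contra h
  push_neg at h
  have hII : ∀ n : ℕ, IntervalIntegrable (fun s => α (u s)) volume (n:ℝ) ((n:ℝ)+1) :=
    fun n => intInt hu n.cast_nonneg (by positivity)
  have h1 : ∀ n : ℕ, (∫⁻ s in Ioc (n:ℝ) ((n:ℝ)+1), ENNReal.ofReal (α (u s)))
      = ENNReal.ofReal (∫ s in (n:ℝ)..((n:ℝ)+1), α (u s)) := by
    intro n
    rw [intervalIntegral.integral_of_le (by linarith [show (0:ℝ) ≤ (n:ℝ) from n.cast_nonneg] : (n:ℝ) ≤ (n:ℝ)+1)]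
    exact (ofReal_integral_eq_lintegral_ofReal (hII n).1
      (ae_of_all _ fun s => hαnn _)).symm
  have hUnion : Ioi (0:ℝ) = ⋃ n : ℕ, Ioc (n:ℝ) ((n:ℝ)+1) := by
    ext x
    simp only [mem_Ioi, mem_iUnion, mem_Ioc]
    constructor
    · intro hx
      have hcx : 1 ≤ ⌈x⌉₊ := Nat.one_le_ceil_iff.mpr hx
      refine ⟨⌈x⌉₊ - 1, ?_, ?_⟩
      · exact_mod_cast Nat.lt_ceil.mp (by omega)
      · have : ((⌈x⌉₊ - 1 : ℕ) : ℝ) + 1 = (⌈x⌉₊ : ℝ) := by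
          rw [Nat.cast_sub hcx]; ring
        rw [this]; exact Nat.le_ceil x
    · rintro ⟨n, hn1, _⟩
      exact lt_of_le_of_lt n.cast_nonneg hn1
  have hdisj : Pairwise (Function.onFun Disjoint fun n : ℕ => Ioc (n:ℝ) ((n:ℝ)+1)) := by
    intro m n hmn
    rcases hmn.lt_or_gt with hlt | hlt
    · refine Set.Ioc_disjoint_Ioc.mpr ?_
      have : (m:ℝ) + 1 ≤ (n:ℝ) := by exact_mod_cast hlt
      calc min ((m:ℝ)+1) ((n:ℝ)+1) ≤ (m:ℝ)+1 := min_le_left _ _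
        _ ≤ (n:ℝ) := this
        _ ≤ max (m:ℝ) (n:ℝ) := le_max_right _ _
    · refine Set.Ioc_disjoint_Ioc.mpr ?_
      have : (n:ℝ) + 1 ≤ (m:ℝ) := by exact_mod_cast hlt
      calc min ((m:ℝ)+1) ((n:ℝ)+1) ≤ (n:ℝ)+1 := min_le_right _ _
        _ ≤ (m:ℝ) := this
        _ ≤ max (m:ℝ) (n:ℝ) := le_max_left _ _
  have htop := hu.2.2
  rw [← setLIntegral_congr (Ioi_ae_eq_Ici (a := (0:ℝ))), hUnion,
    lintegral_iUnion (fun _ => measurableSet_Ioc) hdisj] at htop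
  have hle : (∑' n : ℕ, ∫⁻ s in Ioc (n:ℝ) ((n:ℝ)+1), ENNReal.ofReal (α (u s)))
      ≤ ENNReal.ofReal R := by
    refine ENNReal.tsum_le_of_sum_range_le fun n => ?_
    have htel : (∑ i ∈ Finset.range n, ∫ s in ((i:ℕ):ℝ)..(((i+1:ℕ)):ℝ), α (u s))
        = ∫ s in ((0:ℕ):ℝ)..((n:ℕ):ℝ), α (u s) :=
      intervalIntegral.sum_integral_adjacent_intervals fun k _ => by
        push_cast; exact hII k
    calc (∑ i ∈ Finset.range n, ∫⁻ s in Ioc (i:ℝ) ((i:ℝ)+1), ENNReal.ofReal (α (u s)))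
        = ∑ i ∈ Finset.range n, ENNReal.ofReal (∫ s in (i:ℝ)..((i:ℝ)+1), α (u s)) := by
          exact Finset.sum_congr rfl fun i _ => h1 i
      _ = ENNReal.ofReal (∑ i ∈ Finset.range n, ∫ s in (i:ℝ)..((i:ℝ)+1), α (u s)) :=
          (ENNReal.ofReal_sum_of_nonneg fun i _ =>
            intervalIntegral.integral_nonneg (by linarith [show (0:ℝ) ≤ (i:ℝ) from i.cast_nonneg]) fun s _ => hαnn _).symm
      _ = ENNReal.ofReal (∫ s in (0:ℝ)..(n:ℝ), α (u s)) := by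
          push_cast at htel
          rw [← htel]
      _ ≤ ENNReal.ofReal R := ENNReal.ofReal_le_ofReal (h _ n.cast_nonneg).le
  rw [htop] at hle
  exact absurd hle (by simp)


lemma shiftMem (hu : u ∈ ModulInputs p α) {τ : ℝ} (hτ : 0 ≤ τ) :
    (fun s => u (s + τ)) ∈ ModulInputs p α := by
  have hpre : (fun x : ℝ => x + τ) ⁻¹' Ici τ = Ici (0:ℝ) := by
    have := pre_Ici τ 0; rwa [zero_add] at this
  have hsub : volume.restrict (Ici τ) ≤ volume.restrict (Ici (0:ℝ)) :=
    Measure.restrict_mono (Ici_subset_Ici.mpr hτ) le_rfl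
  refine ⟨?_, ?_, ?_⟩
  · have h1 : MemLp u p (volume.restrict (Ici τ)) := hu.1.mono_measure hsub
    have := (memℒp_comp_shift (g := u) (τ := τ) (s := Ici τ) measurableSet_Ici).mpr h1
    rwa [hpre] at this
  · rw [locallyIntegrableOn_iff isClosed_Ici.isLocallyClosed]
    intro k hk hkc
    obtain ⟨b, hb⟩ := hkc.bddAbove
    have hkI : k ⊆ Icc 0 (max b 0) := fun x hx => ⟨hk hx, le_max_of_le_left (hb hx)⟩
    refine IntegrableOn.mono_set ?_ hkI
    show IntegrableOn (fun s => α (u (s + τ))) (Icc (0:ℝ) (max b 0)) volume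
    have hIcc : Icc (0:ℝ) (max b 0) = (fun x : ℝ => x + τ) ⁻¹' Icc (0 + τ) (max b 0 + τ) :=
      (pre_Icc τ 0 (max b 0)).symm
    rw [hIcc, integrableOn_comp_shift (g := fun s => α (u s)) measurableSet_Icc]
    exact hu.2.1.integrableOn_compact_subset (fun x hx => le_trans (by linarith) hx.1)
      isCompact_Icc
  · have hmeas : AEMeasurable (fun s => ENNReal.ofReal (α (u s))) (volume.restrict (Ici τ)) :=
      ENNReal.measurable_ofReal.comp_aemeasurable
        ((hu.2.1.aestronglyMeasurable.mono_measure hsub).aemeasurable)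
    have hshift := lintegral_comp_shift (τ := τ) measurableSet_Ici hmeas
    rw [hpre] at hshift
    rw [← hshift]
    have hint : IntegrableOn (fun s => α (u s)) (Icc 0 τ) volume :=
      hu.2.1.integrableOn_compact_subset (fun x hx => hx.1) isCompact_Icc
    have hfin : (∫⁻ s in Ico (0:ℝ) τ, ENNReal.ofReal (α (u s))) ≠ ⊤ :=
      (lt_of_le_of_lt (lintegral_mono_set Ico_subset_Icc_self)
        (Integrable.lintegral_lt_top hint)).ne
    have hsplit : ((∫⁻ s in Ico (0:ℝ) τ, ENNReal.ofReal (α (u s))) +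
        ∫⁻ s in Ici τ, ENNReal.ofReal (α (u s))) = ⊤ := by
      rw [← lintegral_union measurableSet_Ici
        (Set.disjoint_left.mpr fun x hx hx' => absurd hx.2 (not_lt.mpr hx')),
        Ico_union_Ici_eq_Ici hτ]
      exact hu.2.2
    by_contra hne
    exact (ENNReal.add_ne_top.mpr ⟨hfin, hne⟩) hsplit

lemma shift_eLpNorm_le (hu : u ∈ ModulInputs p α) {τ : ℝ} (hτ : 0 ≤ τ) :
    (eLpNorm (fun s => u (s + τ)) p (volume.restrict (Ici (0:ℝ)))).toReal ≤
      (eLpNorm u p (volume.restrict (Ici (0:ℝ)))).toReal := by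
  have hpre : (fun x : ℝ => x + τ) ⁻¹' Ici τ = Ici (0:ℝ) := by
    have := pre_Ici τ 0; rwa [zero_add] at this
  have hsub : volume.restrict (Ici τ) ≤ volume.restrict (Ici (0:ℝ)) :=
    Measure.restrict_mono (Ici_subset_Ici.mpr hτ) le_rfl
  have h1 := eLpNorm_comp_shift (p := p) u τ (s := Ici τ) measurableSet_Ici
  rw [hpre] at h1
  refine ENNReal.toReal_mono hu.1.eLpNorm_ne_top ?_
  exact h1.le.trans (eLpNorm_mono_measure u hsub)

lemma concatMem {u₁ u₂ : ℝ → ℝ} (h1 : u₁ ∈ ModulInputs p α)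
    (h2 : u₂ ∈ ModulInputs p α) {τ : ℝ} (hτ : 0 ≤ τ) :
    (fun s => if s < τ then u₁ s else u₂ (s - τ)) ∈ ModulInputs p α := by
  have hpre : (fun x : ℝ => x + -τ) ⁻¹' Ici 0 = Ici τ := by
    have := pre_Ici (-τ) τ; rwa [add_neg_cancel] at this
  have hrr : (volume.restrict (Ici (0:ℝ))).restrict (Ici τ) = volume.restrict (Ici τ) := by
    rw [Measure.restrict_restrict measurableSet_Ici,
      Set.inter_eq_left.mpr (Ici_subset_Ici.mpr hτ)]
  refine ⟨?_, ?_, ?_⟩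
  · have key : (fun s : ℝ => if s < τ then u₁ s else u₂ (s - τ)) =
        (Iio τ).indicator u₁ + (Ici τ).indicator (fun s => u₂ (s - τ)) := by
      funext s
      by_cases h : s < τ
      · simp [Set.indicator_apply, h, not_le.mpr h]
      · simp [Set.indicator_apply, h, not_lt.mp h]
    rw [key]
    refine (h1.1.indicator measurableSet_Iio).add ?_
    rw [memLp_indicator_iff_restrict measurableSet_Ici, hrr]
    have := (memℒp_comp_shift (g := u₂) (τ := -τ) (s := Ici (0:ℝ)) measurableSet_Ici).mpr h2.1
    rw [hpre] at this
    simpa [sub_eq_add_neg] using this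
  · rw [locallyIntegrableOn_iff isClosed_Ici.isLocallyClosed]
    intro k hk hkc
    obtain ⟨b, hb⟩ := hkc.bddAbove
    have hbb : k ⊆ Icc 0 (max b τ) := fun x hx => ⟨hk hx, le_max_of_le_left (hb hx)⟩
    have hksplit : k = (k ∩ Iio τ) ∪ (k ∩ Ici τ) := by
      rw [← Set.inter_union_distrib_left, Iio_union_Ici, Set.inter_univ]
    rw [hksplit]
    refine IntegrableOn.union ?_ ?_
    · have hbase : IntegrableOn (fun s => α (u₁ s)) (k ∩ Iio τ) volume := by
        refine IntegrableOn.mono_set ?_ (fun x hx => (hbb hx.1))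
        exact h1.2.1.integrableOn_compact_subset (fun x hx => hx.1) isCompact_Icc
      exact hbase.congr_fun (fun s hs => by
        show α (u₁ s) = α (if s < τ then u₁ s else u₂ (s - τ))
        rw [if_pos (show s < τ from hs.2)]) 
        (hkc.measurableSet.inter measurableSet_Iio)
    · have hIccpre : (fun x : ℝ => x + -τ) ⁻¹' Icc 0 (max b τ + -τ) = Icc τ (max b τ) := by
        have := pre_Icc (-τ) τ (max b τ); rwa [add_neg_cancel] at this
      have hbase : IntegrableOn (fun s => α (u₂ (s + -τ))) (Icc τ (max b τ)) volume := by
        rw [← hIccpre]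
        rw [integrableOn_comp_shift (g := fun s => α (u₂ s)) measurableSet_Icc]
        exact h2.2.1.integrableOn_compact_subset (fun x hx => hx.1) isCompact_Icc
      have hbase' : IntegrableOn (fun s => α (u₂ (s + -τ))) (k ∩ Ici τ) volume :=
        hbase.mono_set (fun x hx => ⟨hx.2, (hbb hx.1).2⟩)
      exact hbase'.congr_fun
        (fun s hs => by
          show α (u₂ (s + -τ)) = α (if s < τ then u₁ s else u₂ (s - τ))
          rw [if_neg (not_lt.mpr (show τ ≤ s from hs.2)), sub_eq_add_neg])
        (hkc.measurableSet.inter measurableSet_Ici)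
  · have hmeas : AEMeasurable (fun s => ENNReal.ofReal (α (u₂ s)))
        (volume.restrict (Ici (0:ℝ))) :=
      ENNReal.measurable_ofReal.comp_aemeasurable h2.2.1.aestronglyMeasurable.aemeasurable
    have hshift := lintegral_comp_shift (τ := -τ) measurableSet_Ici hmeas
    rw [hpre] at hshift
    have hIci : ∫⁻ s in Ici τ,
        ENNReal.ofReal (α (if s < τ then u₁ s else u₂ (s - τ))) = ⊤ := by
      rw [setLIntegral_congr_fun
        (f := fun s => ENNReal.ofReal (α (if s < τ then u₁ s else u₂ (s - τ))))
        (g := fun s => ENNReal.ofReal (α (u₂ (s - τ)))) measurableSet_Ici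
        (fun s hs => by simp only [if_neg (not_lt.mpr (show τ ≤ s from hs))])]
      · simp only [sub_eq_add_neg]
        rw [← hshift]
        exact h2.2.2
    exact top_le_iff.mp (hIci ▸ lintegral_mono_set (Ici_subset_Ici.mpr hτ))

end ModAux

/-- Let `p ∈ [1,∞]`, `α : ℝ → [0,∞)` with `α 0 = 0` such that `ModulInputs p α`
is nonempty, and let `(T_t)` be a strongly stable `C₀`-semigroup on a Banach space `X`. Then
`φ(t,x₀,u) = T_{∫₀^t α(u(s)) ds} x₀` defines a dynamical system with inputs which is uniformly
globally stable (with `σ̲ = M·r`, `M = sup_{v ≥ 0} ‖T_v‖ < ∞`, and any `γ̲ ∈ 𝒦`) and of weak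
asymptotic gain `0`; in particular it is weakly input-to-state stable. -/

theorem modulated_linear_weakISS
    [NormedSpace ℝ X] [CompleteSpace X]
    (p : ℝ≥0∞) (hp : 1 ≤ p)
    (α : ℝ → ℝ) (hα0 : α 0 = 0) (hαnn : ∀ r : ℝ, 0 ≤ α r)
    (hne : (ModulInputs p α).Nonempty)
    (T : ℝ → X →L[ℝ] X)
    (hT0 : T 0 = ContinuousLinearMap.id ℝ X)
    (hTsem : ∀ s t : ℝ, 0 ≤ s → 0 ≤ t → T (t + s) = (T t).comp (T s))
    (hTcont : ∀ x : X, ContinuousOn (fun t => T t x) (Ici 0))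
    (hTstab : ∀ x : X, Tendsto (fun t => T t x) atTop (nhds 0)) :
    ∃ S : DynSysWithInputs X ℝ,
      S.inputs = ModulInputs p α ∧
      (∀ u : ℝ → ℝ, S.inNorm u = (eLpNorm u p (volume.restrict (Ici (0:ℝ)))).toReal) ∧
      (∀ (t : ℝ) (x₀ : X) (u : ℝ → ℝ), S.flow t x₀ u = T (∫ s in (0:ℝ)..t, α (u s)) x₀) ∧
      BddAbove ((fun v => ‖T v‖) '' Ici (0:ℝ)) ∧
      (∀ γ : ℝ → ℝ, ClassK γ →
        UGSWith S (fun r => sSup ((fun v => ‖T v‖) '' Ici (0:ℝ)) * r) γ) ∧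
      WeakAGWith S (fun _ => 0) ∧
      WeakISS S := by
  have horb : ∀ x : X, ∃ C : ℝ, ∀ v : (Ici (0:ℝ)), ‖T v x‖ ≤ C := by
    intro x
    have h0 := (hTstab x).norm
    rw [norm_zero] at h0
    obtain ⟨N, hN⟩ := eventually_atTop.mp (h0.eventually (gt_mem_nhds one_pos))
    obtain ⟨C, hC⟩ := (isCompact_Icc (a := (0:ℝ)) (b := max N 0)).exists_bound_of_continuousOn
      ((hTcont x).mono (fun y hy => hy.1))
    refine ⟨max C 1, fun v => ?_⟩
    rcases le_total (v : ℝ) (max N 0) with h | h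
    · exact le_max_of_le_left (hC v ⟨v.2, h⟩)
    · exact le_max_of_le_right (hN v (le_trans (le_max_left _ _) h)).le
  obtain ⟨C', hC'⟩ := banach_steinhaus (g := fun v : (Ici (0:ℝ)) => T v) horb
  have hBdd : BddAbove ((fun v => ‖T v‖) '' Ici (0:ℝ)) := by
    refine ⟨C', ?_⟩
    rintro y ⟨v, hv, rfl⟩
    exact hC' ⟨v, hv⟩
  set M := sSup ((fun v => ‖T v‖) '' Ici (0:ℝ)) with hMdef
  have hM : ∀ v : ℝ, 0 ≤ v → ‖T v‖ ≤ M := fun v hv => le_csSup hBdd ⟨v, hv, rfl⟩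
  have hM0 : 0 ≤ M := le_trans (norm_nonneg _) (hM 0 le_rfl)
  have hflow_bound : ∀ (x₀ : X) (u : ℝ → ℝ), u ∈ ModulInputs p α → ∀ t : ℝ, 0 ≤ t →
      ‖T (∫ s in (0:ℝ)..t, α (u s)) x₀‖ ≤ M * ‖x₀‖ := by
    intro x₀ u hu t ht
    calc ‖T (∫ s in (0:ℝ)..t, α (u s)) x₀‖
        ≤ ‖T (∫ s in (0:ℝ)..t, α (u s))‖ * ‖x₀‖ := ContinuousLinearMap.le_opNorm _ _
      _ ≤ M * ‖x₀‖ :=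
          mul_le_mul_of_nonneg_right (hM _ (ModAux.Vnonneg hαnn ht)) (norm_nonneg _)
  have hAG : ∀ ε : ℝ, 0 < ε → ∀ (x₀ : X) (u : ℝ → ℝ), u ∈ ModulInputs p α →
      ∃ τ : ℝ, 0 ≤ τ ∧ ∀ t : ℝ, τ ≤ t → ‖T (∫ s in (0:ℝ)..t, α (u s)) x₀‖ ≤ ε := by
    intro ε hε x₀ u hu
    obtain ⟨N, hN⟩ := Metric.tendsto_atTop.mp (hTstab x₀) ε hε
    obtain ⟨τ, hτ0, hτ⟩ := ModAux.Vunbounded hαnn hu N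
    refine ⟨τ, hτ0, fun t ht => ?_⟩
    have hVt : N ≤ ∫ s in (0:ℝ)..t, α (u s) := hτ.trans (ModAux.Vmono hαnn hu hτ0 ht)
    have := hN _ hVt
    rw [dist_zero_right] at this
    exact this.le
  refine ⟨{ inputs := ModulInputs p α,
            inputs_nonempty := hne,
            inNorm := fun u => (eLpNorm u p (volume.restrict (Ici (0:ℝ)))).toReal,
            inNorm_nonneg := fun u _ => ENNReal.toReal_nonneg,
            flow := fun t x u => T (∫ s in (0:ℝ)..t, α (u s)) x,
            shift_mem := fun u hu τ hτ => ModAux.shiftMem hu hτ,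
            shift_norm_le := fun u hu τ hτ => ModAux.shift_eLpNorm_le hu hτ,
            concat_mem := fun u₁ h1 u₂ h2 τ hτ => ModAux.concatMem h1 h2 hτ,
            flow_zero := fun x u _ => by simp [hT0],
            cocycle := ?_,
            flow_continuous := ?_,
            causal := ?_ }, rfl, fun u => rfl, fun t x u => rfl, hBdd, ?_, ?_, ?_⟩
  · -- cocycle
    intro x₀ u hu s t hs ht
    have hint1 := ModAux.intInt hu le_rfl hs
    have hint2 := ModAux.intInt hu hs (by linarith : (0:ℝ) ≤ t + s)
    have hadd := intervalIntegral.integral_add_adjacent_intervals (μ := volume) hint1 hint2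
    have hcomp : (∫ r in (0:ℝ)..t, α (u (r + s))) = ∫ r in s..(t+s), α (u r) := by
      have := intervalIntegral.integral_comp_add_right (a := (0:ℝ)) (b := t)
        (f := fun r => α (u r)) s
      simpa using this
    show T (∫ r in (0:ℝ)..(t+s), α (u r)) x₀
        = T (∫ r in (0:ℝ)..t, α (u (r+s))) (T (∫ r in (0:ℝ)..s, α (u r)) x₀)
    rw [← hadd, hcomp]
    have ha : 0 ≤ ∫ r in (0:ℝ)..s, α (u r) := ModAux.Vnonneg hαnn hs
    have hb : 0 ≤ ∫ r in s..(t+s), α (u r) :=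
      intervalIntegral.integral_nonneg (by linarith) fun r _ => hαnn _
    rw [add_comm, hTsem _ _ ha hb]
    rfl
  · -- flow_continuous
    intro x₀ u hu
    exact ContinuousOn.comp (hTcont x₀) (ModAux.Vcont hu)
      (fun t ht => ModAux.Vnonneg hαnn ht)
  · -- causal
    intro x₀ u₁ h1 u₂ h2 τ hτ heq t ht
    have hInt : (∫ s in (0:ℝ)..t, α (u₁ s)) = ∫ s in (0:ℝ)..t, α (u₂ s) := by
      refine intervalIntegral.integral_congr fun s hs => ?_
      rw [uIcc_of_le ht.1] at hs
      rw [heq s ⟨hs.1, hs.2.trans ht.2⟩]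
    show T (∫ s in (0:ℝ)..t, α (u₁ s)) x₀ = T (∫ s in (0:ℝ)..t, α (u₂ s)) x₀
    rw [hInt]
  · -- UGS with M and any γ ∈ 𝒦
    intro γ hγ x₀ u hu t ht
    have h1 := hflow_bound x₀ u hu t ht
    have h2 : 0 ≤ γ ((eLpNorm u p (volume.restrict (Ici (0:ℝ)))).toReal) :=
      hγ.2.2.2 _ ENNReal.toReal_nonneg
    show ‖T (∫ s in (0:ℝ)..t, α (u s)) x₀‖
        ≤ M * ‖x₀‖ + γ ((eLpNorm u p (volume.restrict (Ici (0:ℝ)))).toReal)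
    linarith
  · -- WeakAGWith 0
    intro ε hε x₀ u hu
    obtain ⟨τ, hτ0, hτ⟩ := hAG ε hε x₀ u hu
    exact ⟨τ, hτ0, fun t ht => by simpa using hτ t ht⟩
  · -- WeakISS
    constructor
    · refine ⟨fun r => (M+1)*r, id, ?_, ?_, ?_⟩
      · refine ⟨(continuous_const.mul continuous_id).continuousOn, ?_, by ring, ?_⟩
        · intro a _ b _ hab
          exact mul_lt_mul_of_pos_left hab (by linarith)
        · intro r hr
          exact mul_nonneg (by linarith) hr
      · exact ⟨continuousOn_id, fun a _ b _ hab => hab, rfl, fun r hr => hr⟩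
      · intro x₀ u hu t ht
        have h1 := hflow_bound x₀ u hu t ht
        have h2 : (0:ℝ) ≤ (eLpNorm u p (volume.restrict (Ici (0:ℝ)))).toReal :=
          ENNReal.toReal_nonneg
        have h3 : (0:ℝ) ≤ ‖x₀‖ := norm_nonneg _
        show ‖T (∫ s in (0:ℝ)..t, α (u s)) x₀‖
            ≤ (M+1) * ‖x₀‖ + id ((eLpNorm u p (volume.restrict (Ici (0:ℝ)))).toReal)
        simp only [id]
        nlinarith
    · refine ⟨fun _ => 0, Or.inr fun r => rfl, ?_⟩
      intro ε hε x₀ u hu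
      obtain ⟨τ, hτ0, hτ⟩ := hAG ε hε x₀ u hu
      exact ⟨τ, hτ0, fun t ht => by simpa using hτ t ht⟩
end
end

section
/- Let p ∈ [1,∞) ∪ {∞}, let α : ℝ → [0,∞) satisfy α(0) = 0, and suppose the set 𝒰 := { u ∈ L^p([0,∞),ℝ) : α∘u is locally integrable and ∫₀^∞ α(u(s)) ds = ∞ }, equipped with ‖·‖_𝒰 := ‖·‖_{L^p}, is nonempty. Let X be a nontrivial Banach space (X ≠ {0}) and let (T_t)_{t≥0} be a C₀-semigroup on X, and define φ(t,x₀,u) := T_{∫₀^t α(u(s)) ds} x₀. Then the system 𝔖 := (X,𝒰,φ) is NOT of strong asymptotic gain: for every γ̄ ∈ 𝒦 ∪ {0} there exist ε > 0 and x₀ ∈ X such that for every τ ≥ 0 there exist t ≥ τ and u ∈ 𝒰 with ‖φ(t,x₀,u)‖ > ε + γ̄(‖u‖_𝒰). In particular, 𝔖 is not strongly input-to-state stable. -/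
open MeasureTheory Filter Set Topology
open scoped ENNReal NNReal

noncomputable section

variable {X U : Type*} [NormedAddCommGroup X]

private lemma modul_shift_main (p : ℝ≥0∞) (α : ℝ → ℝ)
    (u₀ : ℝ → ℝ) (hu : u₀ ∈ ModulInputs p α) (τ : ℝ) (hτ : 0 ≤ τ) :
    (fun s => if s < τ then 0 else u₀ (s - τ)) ∈ ModulInputs p α ∧
    eLpNorm (fun s => if s < τ then 0 else u₀ (s - τ)) p (volume.restrict (Ici (0:ℝ)))
      = eLpNorm u₀ p (volume.restrict (Ici (0:ℝ))) := by
  obtain ⟨hℒp, hloc, htop⟩ := hu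
  set f : ℝ → ℝ := fun s => s - τ with hf
  have hmp : MeasurePreserving f volume volume := measurePreserving_sub_right volume τ
  have hemb : MeasurableEmbedding f := by
    simpa [hf, sub_eq_add_neg] using measurableEmbedding_addRight (-τ)
  have hpre : f ⁻¹' (Ici (0:ℝ)) = Ici τ := by
    ext s; simp [hf, sub_nonneg]
  have hres : MeasurePreserving f (volume.restrict (Ici τ)) (volume.restrict (Ici (0:ℝ))) := by
    have := hmp.restrict_preimage (measurableSet_Ici (a := (0:ℝ)))
    rwa [hpre] at this
  have hrr : (volume.restrict (Ici (0:ℝ))).restrict (Ici τ) = volume.restrict (Ici τ) := by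
    rw [Measure.restrict_restrict measurableSet_Ici,
      Set.inter_eq_left.mpr (Set.Ici_subset_Ici.mpr hτ)]
  have hind : (fun s => if s < τ then 0 else u₀ (s - τ))
      = (Ici τ).indicator (fun s => u₀ (f s)) := by
    funext s
    rw [Set.indicator_apply]
    by_cases h : s < τ
    · rw [if_pos h, if_neg (by simpa [Set.mem_Ici] using not_le.mpr h)]
    · rw [if_neg h, if_pos (Set.mem_Ici.mpr (not_lt.mp h))]
  have hAESM : AEStronglyMeasurable (fun s => u₀ (f s)) (volume.restrict (Ici τ)) :=
    (hres.aestronglyMeasurable_comp_iff hemb).mpr hℒp.1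
  have hnorm : eLpNorm (fun s => if s < τ then 0 else u₀ (s - τ)) p
        (volume.restrict (Ici (0:ℝ))) = eLpNorm u₀ p (volume.restrict (Ici (0:ℝ))) := by
    rw [hind, eLpNorm_indicator_eq_eLpNorm_restrict measurableSet_Ici, hrr]
    exact eLpNorm_comp_measurePreserving hℒp.1 hres
  refine ⟨⟨⟨?_, ?_⟩, ?_, ?_⟩, hnorm⟩
  · rw [hind]
    exact (aestronglyMeasurable_indicator_iff measurableSet_Ici).mpr
      (by rw [hrr]; exact hAESM)
  · rw [hnorm]; exact hℒp.2
  · -- locally integrable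
    rw [locallyIntegrableOn_iff isClosed_Ici.isLocallyClosed]
    intro k hks hkc
    obtain ⟨M, hM⟩ := hkc.isBounded.subset_closedBall 0
    set b : ℝ := max M τ with hb
    have hτb : τ ≤ b := le_max_right _ _
    have h1 : IntegrableOn (fun s => α (if s < τ then 0 else u₀ (s - τ))) (Ico 0 τ) volume := by
      have hconst : IntegrableOn (fun _ : ℝ => α 0) (Ico 0 τ) volume :=
        integrableOn_const (C := α 0) measure_Ico_lt_top.ne
      refine hconst.congr_fun (fun s hs => ?_) measurableSet_Ico
      show α 0 = α (if s < τ then 0 else u₀ (s - τ))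
      rw [if_pos hs.2]
    have h2 : IntegrableOn (fun s => α (if s < τ then 0 else u₀ (s - τ))) (Icc τ b) volume := by
      have e1 : IntegrableOn (fun s => α (u₀ s)) (Icc 0 (b - τ)) volume :=
        hloc.integrableOn_compact_subset Set.Icc_subset_Ici_self isCompact_Icc
      have e2 : IntegrableOn ((fun s => α (u₀ s)) ∘ f) (f ⁻¹' Icc 0 (b - τ)) volume :=
        (hmp.integrableOn_comp_preimage hemb).mpr e1
      have hpre2 : f ⁻¹' Icc 0 (b - τ) = Icc τ b := by
        ext s; simp [hf, sub_nonneg, sub_le_sub_iff_right]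
      rw [hpre2] at e2
      refine e2.congr_fun (fun s hs => ?_) measurableSet_Icc
      simp only [Function.comp, hf]
      rw [if_neg (not_lt.mpr hs.1)]
    refine (h1.union h2).mono_set (fun s hs => ?_)
    have hs0 : (0:ℝ) ≤ s := hks hs
    have hsb : s ≤ b := by
      have := hM hs
      rw [Real.closedBall_eq_Icc] at this
      exact le_trans this.2 (by simp [hb])
    by_cases h : s < τ
    · exact Or.inl ⟨hs0, h⟩
    · exact Or.inr ⟨not_lt.mp h, hsb⟩
  · -- infinite lintegral
    have e1 : ∫⁻ s in Ici τ, ENNReal.ofReal (α (if s < τ then 0 else u₀ (s - τ)))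
        = ∫⁻ s in Ici τ, ENNReal.ofReal (α (u₀ (f s))) :=
      setLIntegral_congr_fun measurableSet_Ici (fun s hs => by
        rw [if_neg (not_lt.mpr hs)])
    have e2 : ∫⁻ s in Ici τ, ENNReal.ofReal (α (u₀ (f s)))
        = ∫⁻ s in Ici (0:ℝ), ENNReal.ofReal (α (u₀ s)) :=
      hres.lintegral_comp_emb hemb (fun s => ENNReal.ofReal (α (u₀ s)))
    rw [eq_top_iff, ← htop, ← e2, ← e1]
    exact lintegral_mono_set (Set.Ici_subset_Ici.mpr hτ)

/-- Let `p ∈ [1,∞]`, `α : ℝ → [0,∞)` with `α 0 = 0` such that `ModulInputs p α`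
is nonempty, let `X ≠ {0}` be a Banach space and `(T_t)` a `C₀`-semigroup on `X`, and let
`φ(t,x₀,u) = T_{∫₀^t α(u(s)) ds} x₀`. Then the system `(X, ModulInputs p α, φ)` is NOT of
strong asymptotic gain: for every `γ̄ ∈ 𝒦 ∪ {0}` there are `ε > 0` and `x₀ ∈ X` such that for
every `τ ≥ 0` there are `t ≥ τ` and `u ∈ 𝒰` with `‖φ(t,x₀,u)‖ > ε + γ̄(‖u‖_{L^p})`. -/
theorem modulated_linear_not_strongAG
    [NormedSpace ℝ X] [Nontrivial X]
    (p : ℝ≥0∞) (hp : 1 ≤ p)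
    (α : ℝ → ℝ) (hα0 : α 0 = 0) (hαnn : ∀ r : ℝ, 0 ≤ α r)
    (hne : (ModulInputs p α).Nonempty)
    (T : ℝ → X →L[ℝ] X)
    (hT0 : T 0 = ContinuousLinearMap.id ℝ X)
    (hTsem : ∀ s t : ℝ, 0 ≤ s → 0 ≤ t → T (t + s) = (T t).comp (T s))
    (hTcont : ∀ x : X, ContinuousOn (fun t => T t x) (Ici 0)) :
    ∀ γbar : ℝ → ℝ, ClassKZero γbar →
      ∃ ε : ℝ, 0 < ε ∧ ∃ x₀ : X, ∀ τ : ℝ, 0 ≤ τ →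
        ∃ t : ℝ, τ ≤ t ∧ ∃ u ∈ ModulInputs p α,
          ε + γbar ((eLpNorm u p (volume.restrict (Ici (0:ℝ)))).toReal)
            < ‖T (∫ s in (0:ℝ)..t, α (u s)) x₀‖ := by
  intro γbar hγ
  obtain ⟨u₀, hu₀⟩ := hne
  have hC0 : 0 ≤ γbar ((eLpNorm u₀ p (volume.restrict (Ici (0:ℝ)))).toReal) := by
    rcases hγ with ⟨_, _, _, h4⟩ | h0
    · exact h4 _ ENNReal.toReal_nonneg
    · rw [h0]
  obtain ⟨y, hy⟩ := exists_ne (0 : X)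
  have hy0 : 0 < ‖y‖ := norm_pos_iff.mpr hy
  refine ⟨1, one_pos,
    ((2 + γbar ((eLpNorm u₀ p (volume.restrict (Ici (0:ℝ)))).toReal)) / ‖y‖) • y,
    fun τ hτ => ⟨τ, le_refl τ, ?_⟩⟩
  obtain ⟨hmem, hnorm⟩ := modul_shift_main p α u₀ hu₀ τ hτ
  refine ⟨_, hmem, ?_⟩
  have hzero : ∫ s in (0:ℝ)..τ, α (if s < τ then 0 else u₀ (s - τ)) = 0 := by
    rw [intervalIntegral.integral_of_le hτ]
    apply integral_eq_zero_of_ae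
    rw [Filter.EventuallyEq, ae_restrict_iff' measurableSet_Ioc]
    filter_upwards [compl_mem_ae_iff.mpr (measure_singleton τ)] with s hs hmem'
    have hsτ : s ≠ τ := hs
    have hlt : s < τ := lt_of_le_of_ne hmem'.2 hsτ
    simp [hlt, hα0]
  rw [hzero, hT0, hnorm]
  simp only [ContinuousLinearMap.id_apply]
  rw [norm_smul, Real.norm_eq_abs, abs_of_nonneg (div_nonneg (by linarith) hy0.le),
    div_mul_cancel₀ _ (ne_of_gt hy0)]
  linarith
end
end

section
/- Let X be a nontrivial Banach space, p ∈ [1,∞) ∪ {∞}, and 𝒰 := L^p([0,∞),ℝ) with ‖·‖_𝒰 = ‖·‖_{L^p}. Let (T_t)_{t≥0} be a C₀-semigroup on X and let α : ℝ → [0,∞) be a continuous function such that α∘u is locally integrable for every u ∈ 𝒰. Define φ(t,x₀,u) := T_{∫₀^t α(u(s)) ds} x₀. Then 𝔖 := (X,𝒰,φ) is a dynamical system with inputs, and 𝔖 is weakly input-to-state stable if and only if 𝔖 is strongly input-to-state stable. -/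
open MeasureTheory Filter Set Topology
open scoped ENNReal NNReal

noncomputable section

variable {X U : Type*} [NormedAddCommGroup X]

private lemma ML_shift {p : ℝ≥0∞} {u : ℝ → ℝ}
    (hu : MemLp u p (volume.restrict (Ici (0:ℝ)))) {τ : ℝ} (hτ : 0 ≤ τ) :
    MemLp (fun s => u (s + τ)) p (volume.restrict (Ici (0:ℝ))) ∧
    eLpNorm (fun s => u (s + τ)) p (volume.restrict (Ici (0:ℝ)))
      ≤ eLpNorm u p (volume.restrict (Ici (0:ℝ))) := by
  have hmp : MeasurePreserving (fun s : ℝ => s + τ) volume volume :=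
    measurePreserving_add_right volume τ
  have hpre : (fun s : ℝ => s + τ) ⁻¹' (Ici τ) = Ici (0:ℝ) := by
    ext s; simp [le_add_iff_nonneg_left]
  have hmp' : MeasurePreserving (fun s : ℝ => s + τ)
      (volume.restrict (Ici (0:ℝ))) (volume.restrict (Ici τ)) := by
    have := hmp.restrict_preimage (measurableSet_Ici (a := τ))
    rwa [hpre] at this
  have hle : volume.restrict (Ici τ) ≤ volume.restrict (Ici (0:ℝ)) :=
    Measure.restrict_mono (Ici_subset_Ici.2 hτ) le_rfl
  have hu' : MemLp u p (volume.restrict (Ici τ)) := hu.mono_measure hle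
  refine ⟨hu'.comp_measurePreserving hmp', ?_⟩
  calc eLpNorm (fun s => u (s + τ)) p (volume.restrict (Ici (0:ℝ)))
      = eLpNorm u p (volume.restrict (Ici τ)) :=
        eLpNorm_comp_measurePreserving hu'.1 hmp'
    _ ≤ _ := eLpNorm_mono_measure u hle

private lemma ML_concat {p : ℝ≥0∞} {u₁ u₂ : ℝ → ℝ}
    (h₁ : MemLp u₁ p (volume.restrict (Ici (0:ℝ))))
    (h₂ : MemLp u₂ p (volume.restrict (Ici (0:ℝ)))) {τ : ℝ} (hτ : 0 ≤ τ) :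
    MemLp (fun s => if s < τ then u₁ s else u₂ (s - τ)) p (volume.restrict (Ici (0:ℝ))) := by
  classical
  set μ0 := volume.restrict (Ici (0:ℝ)) with hμ0
  -- first piece
  have hA : MemLp ((Iio τ).indicator u₁) p μ0 := by
    refine ⟨(aestronglyMeasurable_indicator_iff measurableSet_Iio).2
      (h₁.1.mono_measure Measure.restrict_le_self), ?_⟩
    exact lt_of_le_of_lt (eLpNorm_indicator_le _) h₁.2
  -- second piece
  have hv : MemLp ((Ici (0:ℝ)).indicator u₂) p volume := by
    refine ⟨(aestronglyMeasurable_indicator_iff measurableSet_Ici).2 h₂.1, ?_⟩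
    rw [eLpNorm_indicator_eq_eLpNorm_restrict measurableSet_Ici]
    exact h₂.2
  have hmp : MeasurePreserving (fun s : ℝ => s + -τ) volume volume :=
    measurePreserving_add_right volume (-τ)
  have hB0 : MemLp (fun s => (Ici (0:ℝ)).indicator u₂ (s + -τ)) p volume :=
    hv.comp_measurePreserving hmp
  have hB : MemLp (fun s => (Ici (0:ℝ)).indicator u₂ (s + -τ)) p μ0 :=
    hB0.mono_measure Measure.restrict_le_self
  have hsum := hA.add hB
  have heq : (fun s => if s < τ then u₁ s else u₂ (s - τ))
      = (fun s => (Iio τ).indicator u₁ s + (Ici (0:ℝ)).indicator u₂ (s + -τ)) := by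
    funext s
    by_cases hs : s < τ
    · have : ¬ (0:ℝ) ≤ s + -τ := by linarith
      simp [hs, indicator_of_mem (mem_Iio.2 hs), indicator_of_notMem, this, mem_Ici]
    · have h0 : (0:ℝ) ≤ s + -τ := by push_neg at hs; linarith
      have : s + -τ = s - τ := by ring
      rw [this] at h0 ⊢
      simp [hs, indicator_of_notMem, mem_Iio, indicator_of_mem (mem_Ici.2 h0)]
  rw [heq]
  exact hsum

private lemma ML_intInt {f : ℝ → ℝ} (hf : LocallyIntegrableOn f (Ici (0:ℝ)) volume)
    {a b : ℝ} (ha : 0 ≤ a) (hb : 0 ≤ b) : IntervalIntegrable f volume a b := by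
  rw [intervalIntegrable_iff]
  have h1 : IntegrableOn f (Icc (min a b) (max a b)) volume :=
    hf.integrableOn_compact_subset ((Icc_subset_Icc_left (le_min ha hb)).trans Icc_subset_Ici_self) isCompact_Icc
  exact h1.mono_set Ioc_subset_Icc_self

private lemma ML_cont {f : ℝ → ℝ} (hf : LocallyIntegrableOn f (Ici (0:ℝ)) volume) :
    ContinuousOn (fun t => ∫ s in (0:ℝ)..t, f s) (Ici (0:ℝ)) := by
  intro t ht
  have h1 : IntegrableOn f (Icc 0 (t+1)) volume :=
    hf.integrableOn_compact_subset (Icc_subset_Ici_self) isCompact_Icc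
  have h2 : ContinuousOn (fun x => ∫ s in Ioc 0 x, f s) (Icc 0 (t+1)) :=
    intervalIntegral.continuousOn_primitive h1
  have hmem : Icc (0:ℝ) (t+1) ∈ 𝓝[Ici (0:ℝ)] t := by
    apply mem_nhdsWithin.2
    refine ⟨Iio (t+1), isOpen_Iio, by simp, ?_⟩
    rintro x ⟨hx1, hx2⟩
    exact ⟨hx2, le_of_lt hx1⟩
  have h3 : ContinuousWithinAt (fun x => ∫ s in Ioc 0 x, f s) (Icc 0 (t+1)) t :=
    h2 t ⟨ht, by linarith⟩
  have h4 : ContinuousWithinAt (fun t => ∫ s in (0:ℝ)..t, f s) (Icc 0 (t+1)) t := by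
    refine h3.congr (fun y hy => ?_) ?_
    · exact intervalIntegral.integral_of_le hy.1
    · exact intervalIntegral.integral_of_le ht
  exact h4.mono_of_mem_nhdsWithin hmem

private lemma ML_lb_fin {p : ℝ≥0∞} (hp : 1 ≤ p) (hptop : p ≠ ∞)
    {α : ℝ → ℝ} (hαnn : ∀ r : ℝ, 0 ≤ α r)
    (hloc : ∀ u : ℝ → ℝ, MemLp u p (volume.restrict (Ici (0:ℝ))) →
      LocallyIntegrableOn (fun s => α (u s)) (Ici (0:ℝ)) volume)
    {c δ : ℝ} (hc : 0 < c) (hδ : 0 < δ) (hδα : ∀ a : ℝ, |a| ≤ δ → c/2 ≤ α a)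
    {B : ℝ} (hB : 0 < B) :
    ∃ N : ℝ, 0 ≤ N ∧ ∀ u : ℝ → ℝ, MemLp u p (volume.restrict (Ici (0:ℝ))) →
      (eLpNorm u p (volume.restrict (Ici (0:ℝ)))).toReal ≤ B → ∀ t : ℝ, 0 ≤ t →
      c/2 * (t - N) ≤ ∫ s in (0:ℝ)..t, α (u s) := by
  classical
  set μ0 := volume.restrict (Ici (0:ℝ)) with hμ0
  set pt := p.toReal with hpt
  have hp0 : p ≠ 0 := by intro h; rw [h] at hp; exact absurd hp (by simp)
  set Ne : ℝ≥0∞ := (ENNReal.ofReal δ)⁻¹ ^ pt * (ENNReal.ofReal B) ^ pt with hNe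
  have hNefin : Ne ≠ ∞ := by
    apply ENNReal.mul_ne_top
    · exact ENNReal.rpow_ne_top_of_nonneg ENNReal.toReal_nonneg
        (by simp [ENNReal.inv_ne_top, ENNReal.ofReal_pos.2 hδ, hδ])
    · exact ENNReal.rpow_ne_top_of_nonneg ENNReal.toReal_nonneg ENNReal.ofReal_ne_top
  refine ⟨Ne.toReal, ENNReal.toReal_nonneg, ?_⟩
  intro u hu hnorm t ht
  -- measurable representative
  set v := hu.1.mk u with hv
  have hvm : StronglyMeasurable v := hu.1.stronglyMeasurable_mk
  have huv : u =ᵐ[μ0] v := hu.1.ae_eq_mk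
  have hev : eLpNorm v p μ0 = eLpNorm u p μ0 := (eLpNorm_congr_ae huv).symm
  have hufin : eLpNorm u p μ0 ≠ ∞ := hu.2.ne
  have hule : eLpNorm u p μ0 ≤ ENNReal.ofReal B := by
    rw [← ENNReal.ofReal_toReal hufin]
    exact ENNReal.ofReal_le_ofReal hnorm
  -- the bad set
  set A : Set ℝ := {s | ENNReal.ofReal δ ≤ (‖v s‖₊ : ℝ≥0∞)} with hA
  have hAm : MeasurableSet A := by
    have : Measurable fun s => (‖v s‖₊ : ℝ≥0∞) := hvm.measurable.nnnorm.coe_nnreal_ennreal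
    exact this measurableSet_Ici
  have hcheb : μ0 A ≤ Ne := by
    have := meas_ge_le_mul_pow_eLpNorm_enorm μ0 hp0 hptop hvm.aestronglyMeasurable
      (ε := ENNReal.ofReal δ) (by simp [ENNReal.ofReal_pos.2 hδ, (ENNReal.ofReal_pos.2 hδ).ne']) (fun h => absurd h ENNReal.ofReal_ne_top)
    refine this.trans ?_
    rw [hNe]
    gcongr
    rw [hev]; exact hule
  -- the good set
  set G : Set ℝ := Ioc 0 t \ A with hG
  have hGm : MeasurableSet G := measurableSet_Ioc.diff hAm
  have hGfin : volume G ≠ ∞ :=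
    (measure_mono (diff_subset)).trans_lt measure_Ioc_lt_top |>.ne
  have hvbd : ∀ s ∈ G, c/2 ≤ α (v s) := by
    intro s hs
    have hns : ¬ ENNReal.ofReal δ ≤ (‖v s‖₊ : ℝ≥0∞) := hs.2
    push_neg at hns
    have : ‖v s‖ < δ := by
      have h1 : (‖v s‖₊ : ℝ≥0∞) < ENNReal.ofReal δ := hns
      rw [ENNReal.lt_ofReal_iff_toReal_lt (by simp)] at h1
      simpa using h1
    exact hδα _ (le_of_lt (by rwa [Real.norm_eq_abs] at this))
  -- integrability
  have hiu : IntegrableOn (fun s => α (u s)) (Icc 0 t) volume :=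
    (hloc u hu).integrableOn_compact_subset Icc_subset_Ici_self isCompact_Icc
  have huv' : ∀ᵐ s ∂(volume.restrict (Icc (0:ℝ) t)), u s = v s :=
    ae_restrict_of_ae_restrict_of_subset Icc_subset_Ici_self huv
  have hiv : IntegrableOn (fun s => α (v s)) (Icc 0 t) volume := by
    refine hiu.congr ?_
    filter_upwards [huv'] with s hs
    rw [hs]
  have hivIoc : IntegrableOn (fun s => α (v s)) (Ioc 0 t) volume :=
    hiv.mono_set Ioc_subset_Icc_self
  -- measure lower bound
  have hvolG : t - Ne.toReal ≤ (volume G).toReal := by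
    have hAIoc : volume (Ioc (0:ℝ) t ∩ A) ≤ Ne := by
      have hsub : Ioc (0:ℝ) t ∩ A ⊆ Ici (0:ℝ) := fun s hs => le_of_lt hs.1.1
      have : volume (Ioc (0:ℝ) t ∩ A) = μ0 (Ioc (0:ℝ) t ∩ A) := by
        rw [hμ0, Measure.restrict_apply (measurableSet_Ioc.inter hAm),
          inter_eq_self_of_subset_left hsub]
      rw [this]
      exact (measure_mono (inter_subset_right)).trans hcheb
    have hsplit : volume G + volume (Ioc (0:ℝ) t ∩ A) = volume (Ioc (0:ℝ) t) :=
      measure_diff_add_inter _ hAm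
    have h1 : ENNReal.ofReal t ≤ volume G + Ne := by
      calc ENNReal.ofReal t = volume (Ioc (0:ℝ) t) := by simp [Real.volume_Ioc]
        _ = volume G + volume (Ioc (0:ℝ) t ∩ A) := hsplit.symm
        _ ≤ volume G + Ne := by gcongr
    have h2 : t ≤ (volume G).toReal + Ne.toReal := by
      have := ENNReal.toReal_mono (by
        exact ENNReal.add_ne_top.2 ⟨hGfin, hNefin⟩) h1
      rwa [ENNReal.toReal_ofReal ht, ENNReal.toReal_add hGfin hNefin] at this
    linarith
  -- put it together
  have step1 : ∫ s in (0:ℝ)..t, α (u s) = ∫ s in Ioc (0:ℝ) t, α (v s) := by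
    rw [intervalIntegral.integral_of_le ht]
    refine integral_congr_ae ?_
    filter_upwards [ae_restrict_of_ae_restrict_of_subset (fun s (hs : s ∈ Ioc (0:ℝ) t) => le_of_lt hs.1) huv] with s hs
    rw [hs]
  have step2 : ∫ s in G, α (v s) ≤ ∫ s in Ioc (0:ℝ) t, α (v s) := by
    refine setIntegral_mono_set hivIoc ?_ (HasSubset.Subset.eventuallyLE diff_subset)
    exact Eventually.of_forall (fun s => hαnn _)
  have step3 : c/2 * (volume G).toReal ≤ ∫ s in G, α (v s) :=
    by have := setIntegral_ge_of_const_le hGm hGfin hvbd (hivIoc.mono_set diff_subset)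
       rw [smul_eq_mul, measureReal_def, mul_comm] at this; exact this
  have step4 : c/2 * (t - Ne.toReal) ≤ c/2 * (volume G).toReal := by
    apply mul_le_mul_of_nonneg_left hvolG (by linarith)
  rw [step1]
  linarith

private lemma ML_lb_top {α : ℝ → ℝ} (hαcont : Continuous α) (hαpos : ∀ r : ℝ, 0 < α r)
    (hloc : ∀ u : ℝ → ℝ, MemLp u ∞ (volume.restrict (Ici (0:ℝ))) →
      LocallyIntegrableOn (fun s => α (u s)) (Ici (0:ℝ)) volume)
    {B : ℝ} (hB : 0 < B) :
    ∃ m : ℝ, 0 < m ∧ ∀ u : ℝ → ℝ, MemLp u ∞ (volume.restrict (Ici (0:ℝ))) →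
      (eLpNorm u ∞ (volume.restrict (Ici (0:ℝ)))).toReal ≤ B → ∀ t : ℝ, 0 ≤ t →
      m * t ≤ ∫ s in (0:ℝ)..t, α (u s) := by
  classical
  set μ0 := volume.restrict (Ici (0:ℝ)) with hμ0
  obtain ⟨a₀, ha₀mem, ha₀⟩ := isCompact_Icc.exists_isMinOn (s := Icc (-B) B)
    ⟨0, by constructor <;> linarith⟩ hαcont.continuousOn
  refine ⟨α a₀, hαpos a₀, ?_⟩
  intro u hu hnorm t ht
  have hufin : eLpNorm u ∞ μ0 ≠ ∞ := hu.2.ne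
  have hule : eLpNorm u ∞ μ0 ≤ ENNReal.ofReal B := by
    rw [← ENNReal.ofReal_toReal hufin]
    exact ENNReal.ofReal_le_ofReal hnorm
  have hae : ∀ᵐ s ∂μ0, |u s| ≤ B := by
    filter_upwards [enorm_ae_le_eLpNormEssSup u μ0] with s hs
    have h1 : (‖u s‖₊ : ℝ≥0∞) ≤ ENNReal.ofReal B := by
      refine hs.trans ?_
      rw [← eLpNorm_exponent_top]
      exact hule
    rw [← Real.norm_eq_abs]
    have := ENNReal.toReal_mono ENNReal.ofReal_ne_top h1
    rwa [ENNReal.toReal_ofReal hB.le, ENNReal.coe_toReal, coe_nnnorm] at this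
  have haeb : ∀ᵐ s ∂(volume.restrict (Icc (0:ℝ) t)), α a₀ ≤ α (u s) := by
    filter_upwards [ae_restrict_of_ae_restrict_of_subset Icc_subset_Ici_self hae] with s hs
    exact ha₀ ⟨by linarith [abs_le.1 hs |>.1], (abs_le.1 hs).2⟩
  have hi : IntervalIntegrable (fun s => α (u s)) volume 0 t := by
    rw [intervalIntegrable_iff_integrableOn_Ioc_of_le ht]
    exact ((hloc u hu).integrableOn_compact_subset Icc_subset_Ici_self isCompact_Icc).mono_set
      Ioc_subset_Icc_self
  have hconst : IntervalIntegrable (fun _ : ℝ => α a₀) volume 0 t := intervalIntegrable_const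
  have := intervalIntegral.integral_mono_ae_restrict ht hconst hi haeb
  calc α a₀ * t = ∫ _ in (0:ℝ)..t, α a₀ := by
        rw [intervalIntegral.integral_const]; ring_nf
    _ ≤ _ := this

private lemma ML_gainK {g : ℝ → ℝ} (hg : ClassKZero g) : ClassK (fun r => g r + r) := by
  obtain hK | hz := hg
  · refine ⟨hK.1.add continuousOn_id, ?_, by simp [hK.2.2.1],
      fun r hr => add_nonneg (hK.2.2.2 r hr) hr⟩
    intro x hx y hy hxy
    exact add_lt_add (hK.2.1 hx hy hxy) hxy
  · have h : (fun r : ℝ => g r + r) = fun r => r := by funext r; simp [hz r]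
    rw [h]
    exact ⟨continuousOn_id, fun x _ y _ h => h, rfl, fun r hr => hr⟩

private lemma ML_iff {X : Type*} [NormedAddCommGroup X] [NormedSpace ℝ X] [CompleteSpace X]
    [Nontrivial X]
    (p : ℝ≥0∞) (hp : 1 ≤ p)
    (α : ℝ → ℝ) (hαcont : Continuous α) (hαnn : ∀ r : ℝ, 0 ≤ α r)
    (hloc : ∀ u : ℝ → ℝ, MemLp u p (volume.restrict (Ici (0:ℝ))) →
      LocallyIntegrableOn (fun s => α (u s)) (Ici (0:ℝ)) volume)
    (T : ℝ → X →L[ℝ] X)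
    (hT0 : T 0 = ContinuousLinearMap.id ℝ X)
    (hTsem : ∀ s t : ℝ, 0 ≤ s → 0 ≤ t → T (t + s) = (T t).comp (T s))
    (S : DynSysWithInputs X ℝ)
    (hSin : S.inputs = {u : ℝ → ℝ | MemLp u p (volume.restrict (Ici (0:ℝ)))})
    (hSnorm : ∀ u : ℝ → ℝ, S.inNorm u = (eLpNorm u p (volume.restrict (Ici (0:ℝ)))).toReal)
    (hSflow : ∀ (t : ℝ) (x₀ : X) (u : ℝ → ℝ), S.flow t x₀ u = T (∫ s in (0:ℝ)..t, α (u s)) x₀)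
    (hlbfin : p ≠ ∞ → ∀ {c δ : ℝ}, 0 < c → 0 < δ → (∀ a : ℝ, |a| ≤ δ → c/2 ≤ α a) →
      ∀ {B : ℝ}, 0 < B →
      ∃ N : ℝ, 0 ≤ N ∧ ∀ u : ℝ → ℝ, MemLp u p (volume.restrict (Ici (0:ℝ))) →
        (eLpNorm u p (volume.restrict (Ici (0:ℝ)))).toReal ≤ B → ∀ t : ℝ, 0 ≤ t →
        c/2 * (t - N) ≤ ∫ s in (0:ℝ)..t, α (u s))
    (hlbtop : p = ∞ → (∀ r : ℝ, 0 < α r) → ∀ {B : ℝ}, 0 < B →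
      ∃ m : ℝ, 0 < m ∧ ∀ u : ℝ → ℝ, MemLp u p (volume.restrict (Ici (0:ℝ))) →
        (eLpNorm u p (volume.restrict (Ici (0:ℝ)))).toReal ≤ B → ∀ t : ℝ, 0 ≤ t →
        m * t ≤ ∫ s in (0:ℝ)..t, α (u s)) :
    WeakISS S ↔ StrongISS S := by
  classical
  constructor
  swap
  · rintro ⟨hUGS, γ, hγK, hSAG⟩
    exact ⟨hUGS, γ, hγK, fun ε hε x₀ u hu =>
      (hSAG ε hε x₀).imp (fun τ h => ⟨h.1, fun t ht => h.2 t ht u hu⟩)⟩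
  rintro ⟨hUGS, gbar, hgbarK, hWAG⟩
  refine ⟨hUGS, fun r => gbar r + r, Or.inl (ML_gainK hgbarK), ?_⟩
  -- basic facts about gbar
  have gbar0 : gbar 0 = 0 := by obtain hK | hz := hgbarK; exacts [hK.2.2.1, hz 0]
  have gbarnn : ∀ r : ℝ, 0 ≤ r → 0 ≤ gbar r := by
    obtain hK | hz := hgbarK; exacts [hK.2.2.2, fun r _ => (hz r).ge]
  -- the zero input
  have h0mem : (fun _ : ℝ => (0:ℝ)) ∈ S.inputs := by
    rw [hSin]; exact MemLp.zero'
  have h0norm : S.inNorm (fun _ : ℝ => (0:ℝ)) = 0 := by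
    rw [hSnorm]
    have : eLpNorm (fun _ : ℝ => (0:ℝ)) p (volume.restrict (Ici (0:ℝ))) = 0 := eLpNorm_zero'
    rw [this]; simp
  have hflow0 : ∀ (t : ℝ) (x₀ : X), S.flow t x₀ (fun _ => (0:ℝ)) = T (t * α 0) x₀ := by
    intro t x₀
    rw [hSflow]
    norm_num [intervalIntegral.integral_const, smul_eq_mul]
  -- positivity of α at 0
  have hc : 0 < α 0 := by
    rcases (hαnn 0).lt_or_eq with h | h
    · exact h
    · exfalso
      obtain ⟨x₀, hx₀⟩ := exists_ne (0 : X)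
      have hx₀n : 0 < ‖x₀‖ := norm_pos_iff.2 hx₀
      obtain ⟨τ, hτ, hbd⟩ := hWAG (‖x₀‖/2) (by positivity) x₀ _ h0mem
      have hb := hbd τ le_rfl
      rw [hflow0, ← h, mul_zero, hT0, h0norm, gbar0] at hb
      simp only [ContinuousLinearMap.id_apply] at hb
      linarith
  -- uniform bound on the semigroup (Banach-Steinhaus)
  obtain ⟨σ, γ, hσK, hγK, hUGSW⟩ := hUGS
  have hbdd : ∀ x : X, ∃ C, ∀ r : {r : ℝ // 0 ≤ r}, ‖T r.1 x‖ ≤ C := by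
    intro x
    refine ⟨σ ‖x‖ + γ 0, ?_⟩
    rintro ⟨r, hr⟩
    have h := hUGSW x _ h0mem (r / α 0) (div_nonneg hr hc.le)
    rw [hflow0, div_mul_cancel₀ _ hc.ne', h0norm] at h
    exact h
  obtain ⟨C', hC'⟩ := banach_steinhaus hbdd
  set M := max C' 1 with hM
  have hM1 : (1:ℝ) ≤ M := le_max_right _ _
  have hMT : ∀ r : ℝ, 0 ≤ r → ∀ x : X, ‖T r x‖ ≤ M * ‖x‖ := by
    intro r hr x
    calc ‖T r x‖ ≤ ‖T r‖ * ‖x‖ := (T r).le_opNorm x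
      _ ≤ M * ‖x‖ := by
          apply mul_le_mul_of_nonneg_right _ (norm_nonneg x)
          exact (hC' ⟨r, hr⟩).trans (le_max_left _ _)
  -- decay of trajectories
  have hdecay : ∀ (x₀ : X) (ε : ℝ), 0 < ε → ∃ ρ : ℝ, 0 ≤ ρ ∧
      ∀ r : ℝ, ρ ≤ r → ‖T r x₀‖ ≤ ε := by
    intro x₀ ε hε
    obtain ⟨τ, hτ, hbd⟩ := hWAG ε hε x₀ _ h0mem
    refine ⟨α 0 * τ, by positivity, ?_⟩
    intro r hr
    have hr0 : 0 ≤ r := le_trans (by positivity) hr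
    have ht : τ ≤ r / α 0 := (le_div_iff₀ hc).2 (by linarith [mul_comm (α 0) τ])
    have h := hbd (r / α 0) ht
    rw [hflow0, div_mul_cancel₀ _ hc.ne', h0norm, gbar0] at h
    linarith
  -- the lower bound on the time reparametrization
  have hE : ∀ B : ℝ, 0 < B → ∃ m N : ℝ, 0 < m ∧ 0 ≤ N ∧
      ∀ u : ℝ → ℝ, MemLp u p (volume.restrict (Ici (0:ℝ))) →
        (eLpNorm u p (volume.restrict (Ici (0:ℝ)))).toReal ≤ B → ∀ t : ℝ, 0 ≤ t →
        m * (t - N) ≤ ∫ s in (0:ℝ)..t, α (u s) := by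
    intro B hB
    by_cases hptop : p = ∞
    · have hαpos : ∀ a : ℝ, 0 < α a := by
        intro a
        rcases (hαnn a).lt_or_eq with h | h
        · exact h
        · exfalso
          have hmem : MemLp (fun _ : ℝ => a) p (volume.restrict (Ici (0:ℝ))) := by
            rw [hptop]
            exact memLp_top_of_bound aestronglyMeasurable_const |a|
              (Eventually.of_forall fun s => le_of_eq (Real.norm_eq_abs a))
          set C := gbar (S.inNorm (fun _ : ℝ => a)) with hC
          have hC0 : 0 ≤ C := gbarnn _ (by rw [hSnorm]; exact ENNReal.toReal_nonneg)
          obtain ⟨y, hy⟩ := exists_ne (0 : X)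
          set x₀ := ((C + 1)/‖y‖) • y with hx₀def
          have hx₀ : ‖x₀‖ = C + 1 := by
            rw [hx₀def, norm_smul, Real.norm_eq_abs, abs_of_nonneg (by positivity),
              div_mul_cancel₀]
            exact norm_ne_zero_iff.2 hy
          obtain ⟨τ, hτ, hbd⟩ := hWAG (1/2) one_half_pos x₀ _ (show _ ∈ S.inputs by rw [hSin]; exact hmem)
          have hb := hbd τ le_rfl
          have hfa : S.flow τ x₀ (fun _ => a) = x₀ := by
            rw [hSflow]
            rw [intervalIntegral.integral_const, smul_eq_mul, ← h, mul_zero, hT0]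
            rfl
          rw [hfa, hx₀, ← hC] at hb
          linarith
      obtain ⟨m, hm, hall⟩ := hlbtop hptop hαpos hB
      exact ⟨m, 0, hm, le_rfl, fun u hu hn t ht => by
        simpa using hall u hu hn t ht⟩
    · obtain ⟨δ, hδpos, hδ⟩ := Metric.continuous_iff.1 hαcont 0 (α 0 / 2) (by positivity)
      have hδα : ∀ a : ℝ, |a| ≤ δ/2 → (α 0)/2 ≤ α a := by
        intro a ha
        have h1 : dist a 0 < δ := by
          rw [Real.dist_eq, sub_zero]; linarith
        have h2 := hδ a h1
        rw [Real.dist_eq] at h2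
        have h3 := (abs_lt.1 h2).1
        linarith
      obtain ⟨N, hN, hall⟩ := hlbfin hptop hc (by positivity : 0 < δ/2) hδα hB
      exact ⟨α 0 / 2, N, by positivity, hN, hall⟩
  -- the strong AG property
  intro ε hε x₀
  by_cases hx₀ : x₀ = 0
  · refine ⟨0, le_rfl, ?_⟩
    intro t ht u hu
    have : S.flow t x₀ u = 0 := by rw [hSflow, hx₀, map_zero]
    rw [this, norm_zero]
    beta_reduce
    have hun : 0 ≤ S.inNorm u := by rw [hSnorm]; exact ENNReal.toReal_nonneg
    have := gbarnn _ hun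
    linarith
  · have hx₀n : 0 < ‖x₀‖ := norm_pos_iff.2 hx₀
    have hB : 0 < M * ‖x₀‖ + 1 := by nlinarith
    obtain ⟨m, N, hm, hN, hall⟩ := hE (M * ‖x₀‖ + 1) hB
    obtain ⟨ρ, hρ, hdec⟩ := hdecay x₀ ε hε
    refine ⟨N + ρ/m, by positivity, ?_⟩
    intro t htτ u hu
    have hu' : MemLp u p (volume.restrict (Ici (0:ℝ))) := by rw [hSin] at hu; exact hu
    have ht0 : 0 ≤ t := le_trans (by positivity) htτ
    have hR0 : 0 ≤ ∫ s in (0:ℝ)..t, α (u s) :=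
      intervalIntegral.integral_nonneg ht0 (fun s _ => hαnn _)
    have hun : 0 ≤ S.inNorm u := by rw [hSnorm]; exact ENNReal.toReal_nonneg
    have hγ'nn : 0 ≤ gbar (S.inNorm u) + S.inNorm u := add_nonneg (gbarnn _ hun) hun
    rw [hSflow]
    by_cases hcase : S.inNorm u ≤ M * ‖x₀‖ + 1
    · have h1 := hall u hu' (by rw [← hSnorm]; exact hcase) t ht0
      have h2 : ρ ≤ m * (t - N) := by
        have h3 : ρ/m ≤ t - N := by linarith
        calc ρ = m * (ρ/m) := by field_simp
          _ ≤ m * (t - N) := mul_le_mul_of_nonneg_left h3 hm.le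
      have h4 := hdec _ (by linarith : ρ ≤ ∫ s in (0:ℝ)..t, α (u s))
      beta_reduce
      linarith
    · push_neg at hcase
      have h1 : ‖T (∫ s in (0:ℝ)..t, α (u s)) x₀‖ ≤ M * ‖x₀‖ := hMT _ hR0 x₀
      have h2 := gbarnn (S.inNorm u) hun
      beta_reduce
      linarith

private def ML_sys {X : Type*} [NormedAddCommGroup X] [NormedSpace ℝ X]
    (p : ℝ≥0∞)
    (α : ℝ → ℝ) (hαnn : ∀ r : ℝ, 0 ≤ α r)
    (hloc : ∀ u : ℝ → ℝ, MemLp u p (volume.restrict (Ici (0:ℝ))) →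
      LocallyIntegrableOn (fun s => α (u s)) (Ici (0:ℝ)) volume)
    (T : ℝ → X →L[ℝ] X)
    (hT0 : T 0 = ContinuousLinearMap.id ℝ X)
    (hTsem : ∀ s t : ℝ, 0 ≤ s → 0 ≤ t → T (t + s) = (T t).comp (T s))
    (hTcont : ∀ x : X, ContinuousOn (fun t => T t x) (Ici 0)) :
    DynSysWithInputs X ℝ where
  inputs := {u : ℝ → ℝ | MemLp u p (volume.restrict (Ici (0:ℝ)))}
  inputs_nonempty := ⟨0, MemLp.zero'⟩
  inNorm := fun u => (eLpNorm u p (volume.restrict (Ici (0:ℝ)))).toReal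
  inNorm_nonneg := fun u _ => ENNReal.toReal_nonneg
  flow := fun t x₀ u => T (∫ s in (0:ℝ)..t, α (u s)) x₀
  shift_mem := fun u hu τ hτ => (ML_shift hu hτ).1
  shift_norm_le := fun u hu τ hτ => ENNReal.toReal_mono hu.2.ne (ML_shift hu hτ).2
  concat_mem := fun u₁ h₁ u₂ h₂ τ hτ => ML_concat h₁ h₂ hτ
  flow_zero := by
    intro x₀ u hu
    show T (∫ s in (0:ℝ)..0, α (u s)) x₀ = x₀
    rw [intervalIntegral.integral_same, hT0]
    rfl
  cocycle := by
    intro x₀ u hu s t hs ht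
    show T (∫ r in (0:ℝ)..(t+s), α (u r)) x₀
      = T (∫ r in (0:ℝ)..t, α (u (r + s))) (T (∫ r in (0:ℝ)..s, α (u r)) x₀)
    have hu' : MemLp u p (volume.restrict (Ici (0:ℝ))) := hu
    have h1 : (∫ r in (0:ℝ)..t, α (u (r + s))) = ∫ r in s..(t+s), α (u r) := by
      simpa using intervalIntegral.integral_comp_add_right (a := (0:ℝ)) (b := t)
        (fun r => α (u r)) s
    have h2 : (∫ r in (0:ℝ)..s, α (u r)) + (∫ r in s..(t+s), α (u r))
        = ∫ r in (0:ℝ)..(t+s), α (u r) :=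
      intervalIntegral.integral_add_adjacent_intervals
        (ML_intInt (hloc u hu') le_rfl hs) (ML_intInt (hloc u hu') hs (by linarith))
    have hR1 : 0 ≤ ∫ r in (0:ℝ)..s, α (u r) :=
      intervalIntegral.integral_nonneg hs (fun r _ => hαnn _)
    have hR2 : 0 ≤ ∫ r in (0:ℝ)..t, α (u (r + s)) :=
      intervalIntegral.integral_nonneg ht (fun r _ => hαnn _)
    have h3 : (∫ r in (0:ℝ)..(t+s), α (u r))
        = (∫ r in (0:ℝ)..t, α (u (r + s))) + (∫ r in (0:ℝ)..s, α (u r)) := by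
      rw [h1]; linarith
    rw [h3, hTsem _ _ hR1 hR2]
    rfl
  flow_continuous := fun x₀ u hu => (hTcont x₀).comp (ML_cont (hloc u hu))
    (fun t ht => intervalIntegral.integral_nonneg ht (fun s _ => hαnn _))
  causal := by
    intro x₀ u₁ h₁ u₂ h₂ τ hτ heq t ht
    show T (∫ s in (0:ℝ)..t, α (u₁ s)) x₀ = T (∫ s in (0:ℝ)..t, α (u₂ s)) x₀
    have he : (∫ s in (0:ℝ)..t, α (u₁ s)) = ∫ s in (0:ℝ)..t, α (u₂ s) := by
      refine intervalIntegral.integral_congr ?_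
      intro s hs
      rw [uIcc_of_le ht.1] at hs
      show α (u₁ s) = α (u₂ s)
      rw [heq s ⟨hs.1, le_trans hs.2 ht.2⟩]
    rw [he]

/-- **Proposition 4.1.** Let `X ≠ {0}` be a Banach space, `p ∈ [1,∞]`,
`𝒰 = L^p([0,∞),ℝ)` with the `L^p`-norm, `(T_t)` a `C₀`-semigroup on `X`, and `α : ℝ → [0,∞)`
continuous with `α ∘ u` locally integrable for every `u ∈ 𝒰`. Then
`φ(t,x₀,u) = T_{∫₀^t α(u(s)) ds} x₀` defines a dynamical system with inputs which is weakly
input-to-state stable if and only if it is strongly input-to-state stable. -/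
theorem modulated_linear_fullLp_weakISS_iff_strongISS
    [NormedSpace ℝ X] [CompleteSpace X] [Nontrivial X]
    (p : ℝ≥0∞) (hp : 1 ≤ p)
    (α : ℝ → ℝ) (hαcont : Continuous α) (hαnn : ∀ r : ℝ, 0 ≤ α r)
    (hloc : ∀ u : ℝ → ℝ, MemLp u p (volume.restrict (Ici (0:ℝ))) →
      LocallyIntegrableOn (fun s => α (u s)) (Ici (0:ℝ)) volume)
    (T : ℝ → X →L[ℝ] X)
    (hT0 : T 0 = ContinuousLinearMap.id ℝ X)
    (hTsem : ∀ s t : ℝ, 0 ≤ s → 0 ≤ t → T (t + s) = (T t).comp (T s))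
    (hTcont : ∀ x : X, ContinuousOn (fun t => T t x) (Ici 0)) :
    ∃ S : DynSysWithInputs X ℝ,
      S.inputs = {u : ℝ → ℝ | MemLp u p (volume.restrict (Ici (0:ℝ)))} ∧
      (∀ u : ℝ → ℝ, S.inNorm u = (eLpNorm u p (volume.restrict (Ici (0:ℝ)))).toReal) ∧
      (∀ (t : ℝ) (x₀ : X) (u : ℝ → ℝ), S.flow t x₀ u = T (∫ s in (0:ℝ)..t, α (u s)) x₀) ∧
      (WeakISS S ↔ StrongISS S) := by
  classical
  refine ⟨ML_sys p α hαnn hloc T hT0 hTsem hTcont, rfl, fun u => rfl, fun t x₀ u => rfl, ?_⟩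
  exact ML_iff p hp α hαcont hαnn hloc T hT0 hTsem _ rfl (fun u => rfl)
    (fun t x₀ u => rfl)
    (fun hptop {c δ} hc hδ hδα {B} hB => ML_lb_fin hp hptop hαnn hloc hc hδ hδα hB)
    (fun hptop hαpos {B} hB => by
      subst hptop
      exact ML_lb_top hαcont hαpos hloc hB)
end
end

section
/- Let X be a nontrivial Banach space, p ∈ [1,∞) ∪ {∞}, and 𝒰 := L^p([0,∞),ℝ) with ‖·‖_𝒰 = ‖·‖_{L^p}. Let (T_t)_{t≥0} be a C₀-semigroup on X and let α : ℝ → [0,∞) be a function such that α∘u is locally integrable for every u ∈ 𝒰, and define φ(t,x₀,u) := T_{∫₀^t α(u(s)) ds} x₀. If the system 𝔖 := (X,𝒰,φ) is of weak asymptotic gain, then α(0) > 0; and if moreover p = ∞, then α(r) > 0 for every r ∈ ℝ. -/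
open MeasureTheory Filter Set Topology
open scoped ENNReal NNReal

noncomputable section

variable {X U : Type*} [NormedAddCommGroup X]

/-- Let `X ≠ {0}` be a Banach space, `p ∈ [1,∞]`, `𝒰 = L^p([0,∞),ℝ)`,
`(T_t)` a `C₀`-semigroup on `X`, `α : ℝ → [0,∞)` with `α ∘ u` locally integrable for every
`u ∈ 𝒰`, and `φ(t,x₀,u) = T_{∫₀^t α(u(s)) ds} x₀`. If the system is of weak asymptotic gain,
then `α 0 > 0`; and if moreover `p = ∞`, then `α r > 0` for every `r`. -/
theorem modulated_linear_weakAG_implies_alpha_pos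
    [NormedSpace ℝ X] [Nontrivial X]
    (p : ℝ≥0∞) (hp : 1 ≤ p)
    (α : ℝ → ℝ) (hαnn : ∀ r : ℝ, 0 ≤ α r)
    (hloc : ∀ u : ℝ → ℝ, MemLp u p (volume.restrict (Ici (0:ℝ))) →
      LocallyIntegrableOn (fun s => α (u s)) (Ici (0:ℝ)) volume)
    (T : ℝ → X →L[ℝ] X)
    (hT0 : T 0 = ContinuousLinearMap.id ℝ X)
    (hTsem : ∀ s t : ℝ, 0 ≤ s → 0 ≤ t → T (t + s) = (T t).comp (T s))
    (hTcont : ∀ x : X, ContinuousOn (fun t => T t x) (Ici 0))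
    (hWAG : ∃ γbar : ℝ → ℝ, ClassKZero γbar ∧
      ∀ ε : ℝ, 0 < ε → ∀ (x₀ : X), ∀ u : ℝ → ℝ,
        MemLp u p (volume.restrict (Ici (0:ℝ))) →
        ∃ τ : ℝ, 0 ≤ τ ∧ ∀ t : ℝ, τ ≤ t →
          ‖T (∫ s in (0:ℝ)..t, α (u s)) x₀‖
            ≤ ε + γbar ((eLpNorm u p (volume.restrict (Ici (0:ℝ)))).toReal)) :
    0 < α 0 ∧ (p = ⊤ → ∀ r : ℝ, 0 < α r) := by
  obtain ⟨γbar, hγ, hW⟩ := hWAG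
  have key : ∀ r₀ : ℝ, MemLp (fun _ => r₀) p (volume.restrict (Ici (0:ℝ))) → 0 < α r₀ := by
    intro r₀ hmem
    by_contra h
    have hα0 : α r₀ = 0 := le_antisymm (not_lt.mp h) (hαnn r₀)
    set C := γbar ((eLpNorm (fun _ => r₀) p (volume.restrict (Ici (0:ℝ)))).toReal) with hC
    have hCnn : 0 ≤ C := by
      rcases hγ with hK | hz
      · exact hK.2.2.2 _ ENNReal.toReal_nonneg
      · rw [hC, hz]
    have bound : ∀ x₀ : X, ‖x₀‖ ≤ 1 + C := by
      intro x₀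
      obtain ⟨τ, hτ0, hτ⟩ := hW 1 one_pos x₀ (fun _ => r₀) hmem
      have hb := hτ τ le_rfl
      have hint : (∫ s in (0:ℝ)..τ, α ((fun _ => r₀) s)) = 0 := by simp [hα0]
      rw [hint, hT0] at hb
      simpa using hb
    obtain ⟨v, hv⟩ := exists_ne (0 : X)
    have hvn : 0 < ‖v‖ := norm_pos_iff.mpr hv
    have hb := bound (((2 + C) / ‖v‖) • v)
    rw [norm_smul, Real.norm_eq_abs, abs_of_nonneg (by positivity), div_mul_cancel₀ _ hvn.ne'] at hb
    linarith
  constructor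
  · exact key 0 (by simpa using (zero_memLp : MemLp (0 : ℝ → ℝ) p (volume.restrict (Ici (0:ℝ)))))
  · intro hp r
    exact key r (hp ▸ memLp_top_const r)
end
end

section
/- Let p ∈ [1,∞) and let α : ℝ → [0,∞) be а function such that c_δ := inf_{|r| ≤ δ} α(r) > 0 for some δ > 0. Let v̄, r̄ ≥ 0 and set τ̄ := v̄/c_δ + r̄^p/δ^p. Then for every u ∈ L^p([0,∞),ℝ) with ‖u‖_{L^p} ≤ r̄ such that α∘u is measurable, one has ∫₀^{τ̄} α(u(s)) ds ≥ v̄. -/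
open MeasureTheory Filter Set Topology
open scoped ENNReal NNReal

/-- **third step of Proposition 4.1, case `p < ∞`.** Let `p ∈ [1,∞)` and let
`α : ℝ → [0,∞)` be such that `c := inf_{|r| ≤ δ} α(r) > 0` for some `δ > 0`. Let `v̄, r̄ ≥ 0`
and `τ̄ := v̄/c + r̄^p/δ^p`. Then every `u ∈ L^p([0,∞),ℝ)` with `‖u‖_{L^p} ≤ r̄` and `α ∘ u`
measurable satisfies `∫₀^{τ̄} α(u(s)) ds ≥ v̄`. -/
theorem lp_lower_integral_bound
    (p : ℝ) (hp : 1 ≤ p)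
    (α : ℝ → ℝ) (hαnn : ∀ r : ℝ, 0 ≤ α r)
    (δ : ℝ) (hδ : 0 < δ)
    (c : ℝ) (hc : c = sInf (α '' {r : ℝ | |r| ≤ δ})) (hcpos : 0 < c)
    (v r : ℝ) (hv : 0 ≤ v) (hr : 0 ≤ r)
    (u : ℝ → ℝ)
    (hu : MemLp u (ENNReal.ofReal p) (volume.restrict (Ici (0:ℝ))))
    (hu_norm : (eLpNorm u (ENNReal.ofReal p) (volume.restrict (Ici (0:ℝ)))).toReal ≤ r)
    (hmeas : AEMeasurable (fun s => α (u s)) (volume.restrict (Ici (0:ℝ)))) :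
    ENNReal.ofReal v
      ≤ ∫⁻ s in Icc (0:ℝ) (v / c + r ^ p / δ ^ p), ENNReal.ofReal (α (u s)) := by
  set μr := volume.restrict (Ici (0:ℝ)) with hμr
  have hppos : 0 < p := lt_of_lt_of_le one_pos hp
  have hpne0 : ENNReal.ofReal p ≠ 0 := by
    simp [ENNReal.ofReal_eq_zero, not_le, hppos]
  have hptoReal : (ENNReal.ofReal p).toReal = p := ENNReal.toReal_ofReal hppos.le
  -- the time horizon
  set τ : ℝ := v / c + r ^ p / δ ^ p with hτ
  have hvc : 0 ≤ v / c := div_nonneg hv hcpos.le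
  have hrd : 0 ≤ r ^ p / δ ^ p :=
    div_nonneg (Real.rpow_nonneg hr p) (Real.rpow_nonneg hδ.le p)
  have hτnn : 0 ≤ τ := add_nonneg hvc hrd
  -- measurable representative
  have hsm := hu.aestronglyMeasurable
  set g : ℝ → ℝ := hsm.mk u with hg
  have hgmeas : Measurable g := hsm.stronglyMeasurable_mk.measurable
  have hug : u =ᵐ[μr] g := hsm.ae_eq_mk
  have hIccsub : Icc (0:ℝ) τ ⊆ Ici (0:ℝ) := fun x hx => hx.1
  have hug' : u =ᵐ[volume.restrict (Icc (0:ℝ) τ)] g := by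
    have := ae_restrict_of_ae_restrict_of_subset hIccsub hug
    exact this
  -- eLpNorm bound for g
  have hgnorm : eLpNorm g (ENNReal.ofReal p) μr ≤ ENNReal.ofReal r := by
    rw [← eLpNorm_congr_ae hug]
    exact ENNReal.le_ofReal_iff_toReal_le hu.eLpNorm_ne_top hr |>.2 hu_norm
  -- the bad set
  set A : Set ℝ := {x | ENNReal.ofReal δ ≤ (‖g x‖₊ : ℝ≥0∞)} with hA
  have hAmeas : MeasurableSet A := by
    have : A = {x | δ ≤ |g x|} := by
      ext x
      simp only [hA, mem_setOf_eq, ← enorm_eq_nnnorm, ← ofReal_norm, Real.norm_eq_abs]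
      exact ENNReal.ofReal_le_ofReal_iff (abs_nonneg _)
    rw [this]
    exact measurableSet_le measurable_const hgmeas.abs
  -- Chebyshev
  have hcheb : μr A ≤ ENNReal.ofReal (r ^ p / δ ^ p) := by
    have h1 := meas_ge_le_mul_pow_eLpNorm_enorm μr hpne0 ENNReal.ofReal_ne_top
      hsm.stronglyMeasurable_mk.aestronglyMeasurable
      (ε := ENNReal.ofReal δ) (by simp [ENNReal.ofReal_eq_zero, not_le, hδ]) (by simp)
    refine h1.trans ?_
    rw [hptoReal]
    calc (ENNReal.ofReal δ)⁻¹ ^ p * eLpNorm g (ENNReal.ofReal p) μr ^ p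
        ≤ (ENNReal.ofReal δ)⁻¹ ^ p * (ENNReal.ofReal r) ^ p := by
          gcongr
      _ = ENNReal.ofReal (r ^ p / δ ^ p) := by
          rw [← ENNReal.ofReal_inv_of_pos hδ,
            ENNReal.ofReal_rpow_of_nonneg (inv_nonneg.2 hδ.le) hppos.le,
            ENNReal.ofReal_rpow_of_nonneg hr hppos.le,
            ← ENNReal.ofReal_mul (Real.rpow_nonneg (inv_nonneg.2 hδ.le) p)]
          congr 1
          rw [div_eq_mul_inv, mul_comm, Real.inv_rpow hδ.le]
  -- the good set
  set B : Set ℝ := Icc (0:ℝ) τ \ A with hB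
  have hBmeas : MeasurableSet B := measurableSet_Icc.diff hAmeas
  have hBvol : ENNReal.ofReal (v / c) ≤ volume B := by
    have hsplit : volume (Icc (0:ℝ) τ) ≤ volume B + volume (Icc (0:ℝ) τ ∩ A) := by
      refine (measure_mono (fun x hx => ?_)).trans (measure_union_le B (Icc (0:ℝ) τ ∩ A))
      by_cases hxA : x ∈ A
      · exact Or.inr ⟨hx, hxA⟩
      · exact Or.inl ⟨hx, hxA⟩
    have hIA : volume (Icc (0:ℝ) τ ∩ A) ≤ ENNReal.ofReal (r ^ p / δ ^ p) := by
      refine le_trans ?_ hcheb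
      rw [hμr, Measure.restrict_apply hAmeas]
      exact measure_mono (fun x hx => ⟨hx.2, hx.1.1⟩)
    have hvol : volume (Icc (0:ℝ) τ) = ENNReal.ofReal τ := by
      rw [Real.volume_Icc, sub_zero]
    have h2 : ENNReal.ofReal (v / c) + ENNReal.ofReal (r ^ p / δ ^ p)
        ≤ volume B + ENNReal.ofReal (r ^ p / δ ^ p) := by
      calc ENNReal.ofReal (v / c) + ENNReal.ofReal (r ^ p / δ ^ p)
          = ENNReal.ofReal τ := by rw [← ENNReal.ofReal_add hvc hrd]
        _ = volume (Icc (0:ℝ) τ) := hvol.symm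
        _ ≤ volume B + volume (Icc (0:ℝ) τ ∩ A) := hsplit
        _ ≤ volume B + ENNReal.ofReal (r ^ p / δ ^ p) := by gcongr
    exact (ENNReal.add_le_add_iff_right ENNReal.ofReal_ne_top).1 h2
  -- pointwise lower bound on B
  have hlow : ∀ x ∈ B, ENNReal.ofReal c ≤ ENNReal.ofReal (α (g x)) := by
    intro x hx
    have hxA : ¬ (δ ≤ |g x|) := by
      intro h
      apply hx.2
      show ENNReal.ofReal δ ≤ (‖g x‖₊ : ℝ≥0∞)
      rw [← enorm_eq_nnnorm, ← ofReal_norm, Real.norm_eq_abs]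
      exact ENNReal.ofReal_le_ofReal h
    have hmem : α (g x) ∈ α '' {r : ℝ | |r| ≤ δ} :=
      ⟨g x, le_of_not_ge hxA, rfl⟩
    have : c ≤ α (g x) := hc ▸ csInf_le ⟨0, fun y ⟨z, _, hz⟩ => hz ▸ hαnn z⟩ hmem
    exact ENNReal.ofReal_le_ofReal this
  -- put it all together
  calc ENNReal.ofReal v = ENNReal.ofReal c * ENNReal.ofReal (v / c) := by
        rw [← ENNReal.ofReal_mul hcpos.le, mul_div_cancel₀ v hcpos.ne']
    _ ≤ ENNReal.ofReal c * volume B := by gcongr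
    _ = ∫⁻ _ in B, ENNReal.ofReal c := by rw [setLIntegral_const, mul_comm]
    _ ≤ ∫⁻ x in B, ENNReal.ofReal (α (g x)) := by
        refine lintegral_mono_ae ?_
        exact (ae_restrict_iff' hBmeas).2 (Filter.Eventually.of_forall hlow)
    _ ≤ ∫⁻ x in Icc (0:ℝ) τ, ENNReal.ofReal (α (g x)) :=
        lintegral_mono_set diff_subset
    _ = ∫⁻ x in Icc (0:ℝ) τ, ENNReal.ofReal (α (u x)) := by
        refine lintegral_congr_ae ?_
        filter_upwards [hug'] with x hx
        rw [hx]
end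

section
/- Let X be a Banach space, let (T_t)_{t≥0} be a strongly stable C₀-semigroup on X with M := sup_{v ≥ 0} ‖T_v‖ < ∞, let α : ℝ → [0,∞), and let 𝒰 be a set of measurable functions u : [0,∞) → ℝ with a norm ‖·‖_𝒰 such that α∘u is locally integrable for every u ∈ 𝒰. Suppose that for every v̄, r̄ ≥ 0 there exists τ̄_{v̄,r̄} ≥ 0 such that ∫₀^{τ̄_{v̄,r̄}} α(u(s)) ds ≥ v̄ for every u ∈ 𝒰 with ‖u‖_𝒰 ≤ r̄. Define φ(t,x₀,u) := T_{∫₀^t α(u(s)) ds} x₀. Then the system 𝔖 := (X,𝒰,φ) is of strong asymptotic gain γ̄ with γ̄(r) := M·r: for every ε > 0 and x₀ ∈ X there exists τ(ε,x₀) ≥ 0 such that ‖φ(t,x₀,u)‖ ≤ ε + M·‖u‖_𝒰 for all t ≥ τ(ε,x₀) and all u ∈ 𝒰. -/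
open MeasureTheory Filter Set Topology
open scoped ENNReal NNReal

/-- **fourth step of Proposition 4.1.** Let `(T_t)` be a strongly stable
`C₀`-semigroup on a Banach space `X` with `‖T_v‖ ≤ M` for all `v ≥ 0`, let `α : ℝ → [0,∞)`,
and let `𝒰` be a set of measurable inputs with a norm `N` such that `α ∘ u` is locally
integrable for every `u ∈ 𝒰` and such that for all `v̄, r̄ ≥ 0` there is a `τ̄ ≥ 0` with
`∫₀^{τ̄} α(u(s)) ds ≥ v̄` for every `u ∈ 𝒰` with `N u ≤ r̄`. Then
`φ(t,x₀,u) := T_{∫₀^t α(u(s)) ds} x₀` is of strong asymptotic gain `r ↦ M·r`. -/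
theorem modulated_linear_strongAG
    {X : Type*} [NormedAddCommGroup X] [NormedSpace ℝ X]
    (T : ℝ → X →L[ℝ] X)
    (hT0 : T 0 = ContinuousLinearMap.id ℝ X)
    (hTsem : ∀ s t : ℝ, 0 ≤ s → 0 ≤ t → T (t + s) = (T t).comp (T s))
    (hTcont : ∀ x : X, ContinuousOn (fun t => T t x) (Set.Ici 0))
    (hTstab : ∀ x : X, Tendsto (fun v : ℝ => T v x) atTop (nhds 0))
    (M : ℝ) (hM : ∀ v : ℝ, 0 ≤ v → ‖T v‖ ≤ M)
    (α : ℝ → ℝ) (hαnn : ∀ r : ℝ, 0 ≤ α r)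
    (𝒰 : Set (ℝ → ℝ)) (h𝒰meas : ∀ u ∈ 𝒰, Measurable u)
    (N : (ℝ → ℝ) → ℝ) (hN : ∀ u ∈ 𝒰, 0 ≤ N u)
    (hloc : ∀ u ∈ 𝒰, LocallyIntegrableOn (fun s => α (u s)) (Set.Ici (0:ℝ)) volume)
    (hτ : ∀ vbar rbar : ℝ, 0 ≤ vbar → 0 ≤ rbar → ∃ τ : ℝ, 0 ≤ τ ∧
      ∀ u ∈ 𝒰, N u ≤ rbar → vbar ≤ ∫ s in (0:ℝ)..τ, α (u s)) :
    ∀ ε : ℝ, 0 < ε → ∀ x₀ : X, ∃ τ : ℝ, 0 ≤ τ ∧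
      ∀ t : ℝ, τ ≤ t → ∀ u ∈ 𝒰,
        ‖T (∫ s in (0:ℝ)..t, α (u s)) x₀‖ ≤ ε + M * N u := by
  intro ε hε x₀
  have hM0 : 0 ≤ M := le_trans (norm_nonneg _) (hM 0 le_rfl)
  -- from strong stability, get v̄ such that ‖T v x₀‖ ≤ ε for v ≥ v̄
  have hstab := (hTstab x₀).eventually (Metric.ball_mem_nhds (0 : X) hε)
  obtain ⟨v₀, hv₀⟩ := hstab.exists_forall_of_atTop
  set vbar : ℝ := max v₀ 0 with hvbar
  have hvbar0 : 0 ≤ vbar := le_max_right _ _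
  obtain ⟨τ, hτ0, hτP⟩ := hτ vbar ‖x₀‖ hvbar0 (norm_nonneg _)
  refine ⟨τ, hτ0, ?_⟩
  intro t ht u hu
  have ht0 : (0:ℝ) ≤ t := le_trans hτ0 ht
  set V : ℝ := ∫ s in (0:ℝ)..t, α (u s) with hV
  have hint : IntervalIntegrable (fun s => α (u s)) volume 0 t := by
    have hcomp : IsCompact (Set.Icc (0:ℝ) t) := isCompact_Icc
    have := (hloc u hu).integrableOn_compact_subset
      (Set.Icc_subset_Ici_self) hcomp
    rw [intervalIntegrable_iff_integrableOn_Ioc_of_le ht0]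
    exact this.mono_set Set.Ioc_subset_Icc_self
  have hVnn : 0 ≤ V := by
    apply intervalIntegral.integral_nonneg ht0
    intro s _; exact hαnn _
  have hbound : ‖T V x₀‖ ≤ M * ‖x₀‖ :=
    le_trans ((T V).le_opNorm x₀) (by
      exact mul_le_mul_of_nonneg_right (hM V hVnn) (norm_nonneg _))
  rcases le_or_gt (N u) ‖x₀‖ with hle | hgt
  · -- N u ≤ ‖x₀‖ : use the divergence assumption
    have h1 : vbar ≤ ∫ s in (0:ℝ)..τ, α (u s) := hτP u hu hle
    have h2 : (∫ s in (0:ℝ)..τ, α (u s)) ≤ V := by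
      apply intervalIntegral.integral_mono_interval le_rfl hτ0 ht
      · filter_upwards with s using hαnn _
      · exact hint
    have hVv : vbar ≤ V := le_trans h1 h2
    have hsmall : ‖T V x₀‖ < ε := by
      have := hv₀ V (le_trans (le_max_left _ _) hVv)
      simpa [dist_eq_norm] using this
    have : (0:ℝ) ≤ M * N u := mul_nonneg hM0 (hN u hu)
    linarith
  · -- N u > ‖x₀‖ : use the uniform bound
    have : M * ‖x₀‖ ≤ M * N u := mul_le_mul_of_nonneg_left hgt.le hM0
    linarith
end

section
/- Let 𝔖 = (X, 𝒰, φ) be a dynamical system with inputs such that 0 ∈ 𝒰 with ‖0‖_𝒰 = 0 and such that the flow decomposes additively: φ(t,x₀,u) = φ(t,x₀,0) + φ(t,0,u) for all t ≥ 0, x₀ ∈ X, u ∈ 𝒰. If 𝔖 is uniformly globally stable with gains σ̲, γ̲ ∈ 𝒦 and of weak asymptotic gain γ̄ for some γ̄ ∈ 𝒦 ∪ {0}, then 𝔖 is of strong asymptotic gain γ̲: for every ε > 0 and x₀ ∈ X there is τ(ε,x₀) ≥ 0 (namely the weak-asymptotic-gain time for (ε, x₀, 0)) such that ‖φ(t,x₀,u)‖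 ≤ ε + γ̲(‖u‖_𝒰) for all t ≥ τ(ε,x₀) and all u ∈ 𝒰. In particular, a weakly input-to-state stable system with additively decomposing flow is strongly input-to-state stable. -/
open MeasureTheory Filter Set Topology
open scoped ENNReal NNReal

noncomputable section

variable {X U : Type*} [NormedAddCommGroup X]

/-- For a dynamical system with inputs whose flow decomposes additively,
`φ(t,x₀,u) = φ(t,x₀,0) + φ(t,0,u)`, uniform global stability (with gains `σ̲, γ̲`) together
with the weak asymptotic gain property implies the strong asymptotic gain property with
gain `γ̲`; in particular such a system is weakly ISS iff it is strongly ISS. -/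
theorem weakISS_implies_strongISS_of_additive_flow
    [Zero U] (S : DynSysWithInputs X U)
    (hz : (fun _ : ℝ => (0 : U)) ∈ S.inputs)
    (hznorm : S.inNorm (fun _ : ℝ => (0 : U)) = 0)
    (hadd : ∀ t : ℝ, 0 ≤ t → ∀ (x₀ : X), ∀ u ∈ S.inputs,
      S.flow t x₀ u = S.flow t x₀ (fun _ : ℝ => (0 : U)) + S.flow t 0 u)
    (σ γ : ℝ → ℝ) (hσ : ClassK σ) (hγ : ClassK γ) (hUGS : UGSWith S σ γ)
    (γbar : ℝ → ℝ) (hγbar : ClassKZero γbar) (hWAG : WeakAGWith S γbar) :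
    StrongAGWith S γ ∧ StrongISS S := by
  have hγbar0 : γbar 0 = 0 := by
    rcases hγbar with h | h
    · exact h.2.2.1
    · exact h 0
  have hmain : StrongAGWith S γ := by
    intro ε hε x₀
    obtain ⟨τ, hτ0, hτ⟩ := hWAG ε hε x₀ _ hz
    refine ⟨τ, hτ0, fun t ht u hu => ?_⟩
    have ht0 : (0:ℝ) ≤ t := le_trans hτ0 ht
    have h1 : ‖S.flow t x₀ (fun _ : ℝ => (0:U))‖ ≤ ε := by
      have := hτ t ht
      rwa [hznorm, hγbar0, add_zero] at this
    have h2 : ‖S.flow t (0:X) u‖ ≤ γ (S.inNorm u) := by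
      have := hUGS (0:X) u hu t ht0
      rwa [norm_zero, hσ.2.2.1, zero_add] at this
    calc ‖S.flow t x₀ u‖
        = ‖S.flow t x₀ (fun _ : ℝ => (0:U)) + S.flow t (0:X) u‖ := by
          rw [hadd t ht0 x₀ u hu]
      _ ≤ ‖S.flow t x₀ (fun _ : ℝ => (0:U))‖ + ‖S.flow t (0:X) u‖ := norm_add_le _ _
      _ ≤ ε + γ (S.inNorm u) := add_le_add h1 h2
  exact ⟨hmain, ⟨σ, γ, hσ, hγ, hUGS⟩, ⟨γ, Or.inl hγ, hmain⟩⟩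
end
end
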